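/- arXiv:1410.0056 — 7 statements merged into one kernel-verified Lean document; each statement's English description precedes it below -/
import Mathlib

section
/- Let d ≥ 1 and n ≥ 1. There exists an antipodal n-fold cover of the sphere S^d consisting of d + 2n open sets in which every point of S^d is covered at most d + n times (i.e., every point lies in at most d + n of the sets). (Upper bound of Theorem 2: Q(d,n) ≤ d + n.) -/
noncomputable section

open scoped RealInnerProductSpace

/-- The unit sphere `S^d = { x ∈ ℝ^{d+1} : ‖x‖ = 1 }`. -/
def sphereSet (d : ℕ) : Set (EuclideanSpace ℝ (Fin (d + 1))) :=
  Metric.sphere 0 1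

/-- `A` is open in the subspace topology of `S^d`. -/
def IsOpenInSphere (d : ℕ) (A : Set (EuclideanSpace ℝ (Fin (d + 1)))) : Prop :=
  ∃ U : Set (EuclideanSpace ℝ (Fin (d + 1))), IsOpen U ∧ A = U ∩ sphereSet d

/-- The number of indices `i` with `x ∈ F i` (how many times `x` is covered). -/
def covCount {d k : ℕ} (F : Fin k → Set (EuclideanSpace ℝ (Fin (d + 1))))
    (x : EuclideanSpace ℝ (Fin (d + 1))) : ℕ :=
  Nat.card {i : Fin k // x ∈ F i}

/-- The family is antipodal: no set contains a pair of antipodal points. -/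
def IsAntipodalFamily {d k : ℕ} (F : Fin k → Set (EuclideanSpace ℝ (Fin (d + 1)))) : Prop :=
  ∀ i : Fin k, ∀ x ∈ F i, -x ∉ F i

/-- `F` is an `n`-fold cover of `S^d` by open subsets of the sphere:
each set is a subset of the sphere, open in the subspace topology, and every
point of the sphere is covered at least `n` times. -/
def IsNFoldCover {d k : ℕ} (n : ℕ) (F : Fin k → Set (EuclideanSpace ℝ (Fin (d + 1)))) : Prop :=
  (∀ i, F i ⊆ sphereSet d) ∧ (∀ i, IsOpenInSphere d (F i)) ∧
    (∀ x ∈ sphereSet d, n ≤ covCount F x)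

/-- The open northern hemisphere of `S^d`. -/
def openNorth (d : ℕ) : Set (EuclideanSpace ℝ (Fin (d + 1))) :=
  {x ∈ sphereSet d | 0 < x (Fin.last d)}

/-- The closed northern hemisphere of `S^d`. -/
def closedNorth (d : ℕ) : Set (EuclideanSpace ℝ (Fin (d + 1))) :=
  {x ∈ sphereSet d | 0 ≤ x (Fin.last d)}

/-- `F` is an `(n,m)`-fold cover of `S^d`: an `n`-fold cover in which every point
of the open northern hemisphere is covered at least `m` times. -/
def IsNMFoldCover {d k : ℕ} (n m : ℕ)
    (F : Fin k → Set (EuclideanSpace ℝ (Fin (d + 1)))) : Prop :=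
  IsNFoldCover n F ∧ ∀ x ∈ openNorth d, m ≤ covCount F x

/-- `F` is an `(n,m)`-closed-hemisphere-fold cover of `S^d`: an `n`-fold cover in
which every point of the closed northern hemisphere is covered at least `m` times. -/
def IsNMBarFoldCover {d k : ℕ} (n m : ℕ)
    (F : Fin k → Set (EuclideanSpace ℝ (Fin (d + 1)))) : Prop :=
  IsNFoldCover n F ∧ ∀ x ∈ closedNorth d, m ≤ covCount F x

open Polynomial Finset


/-- No-integer-zero case of the key counting lemma. -/
lemma nz_lemma (d n : ℕ) (hn : 1 ≤ n) (p : ℝ[X]) (hp : p ≠ 0)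
    (hdeg : p.natDegree ≤ d)
    (hz : ∀ i ∈ Finset.range (d + 2*n), p.eval (i:ℝ) ≠ 0) :
    n ≤ ((Finset.range (d + 2*n)).filter fun i : ℕ => 0 < (-1:ℝ)^i * p.eval (i:ℝ)).card := by
  by_contra hlt
  push_neg at hlt
  set N := d + 2*n with hN
  set P := (Finset.range N).filter (fun i : ℕ => 0 < (-1:ℝ)^i * p.eval (i:ℝ)) with hP
  set M := (Finset.range N).filter (fun i : ℕ => (-1:ℝ)^i * p.eval (i:ℝ) < 0) with hM
  have hPM : ∀ i ∈ Finset.range N, i ∉ M → i ∈ P := by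
    intro i hi hiM
    have hne : p.eval (i:ℝ) ≠ 0 := hz i hi
    have h1 : (-1:ℝ)^i ≠ 0 := by positivity
    have : (-1:ℝ)^i * p.eval (i:ℝ) ≠ 0 := mul_ne_zero h1 hne
    simp only [hM, mem_filter, hi, true_and, not_lt] at hiM
    simp only [hP, mem_filter, hi, true_and]
    exact lt_of_le_of_ne hiM (Ne.symm this)
  have hdisj : Disjoint P M := by
    rw [Finset.disjoint_left]
    intro i hiP hiM
    simp only [hP, mem_filter] at hiP
    simp only [hM, mem_filter] at hiM
    linarith [hiP.2, hiM.2]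
  have hcard : P.card + M.card = N := by
    have hu : P ∪ M = Finset.range N := by
      apply Finset.Subset.antisymm
      · exact Finset.union_subset (Finset.filter_subset _ _) (Finset.filter_subset _ _)
      · intro i hi
        by_cases h : i ∈ M
        · exact Finset.mem_union_right _ h
        · exact Finset.mem_union_left _ (hPM i hi h)
    have := Finset.card_union_of_disjoint hdisj
    rw [hu, Finset.card_range] at this
    omega
  have hMcard : d + n + 1 ≤ M.card := by omega
  set μ := M.card with hμ
  set b : ℕ → ℕ := fun k => if h : k < μ then (M.orderEmbOfFin rfl ⟨k, h⟩ : ℕ) else 0 with hb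
  have hmem : ∀ k, k < μ → b k ∈ M := by
    intro k hk; simp only [hb, dif_pos hk]; exact M.orderEmbOfFin_mem rfl _
  have hmono : ∀ k l, k < l → l < μ → b k < b l := by
    intro k l hkl hl
    simp only [hb, dif_pos hl, dif_pos (lt_trans hkl hl)]
    exact (M.orderEmbOfFin rfl).strictMono (show (⟨k, lt_trans hkl hl⟩ : Fin μ) < ⟨l, hl⟩ from hkl)
  have hgap : ∀ k, k + 1 < μ → ∀ j, b k < j → j < b (k+1) → j ∉ M := by
    intro k hk j h1 h2 hjM
    have : j ∈ Set.range (M.orderEmbOfFin rfl) := by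
      rw [Finset.range_orderEmbOfFin]; exact hjM
    obtain ⟨l, hl⟩ := this
    have hbl : b (l:ℕ) = j := by
      simp only [hb]; rw [dif_pos (show (l:ℕ) < μ from l.isLt)]; exact hl
    have hkl : k < (l:ℕ) := by
      by_contra h
      push_neg at h
      rcases eq_or_lt_of_le h with h' | h'
      · rw [h'] at hbl; omega
      · have := hmono _ _ h' (show k < μ by omega)
        omega
    have hlk : (l:ℕ) < k + 1 := by
      by_contra h
      push_neg at h
      rcases eq_or_lt_of_le h with h' | h'
      · rw [← h'] at hbl; omega
      · have := hmono _ _ h' l.isLt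
        omega
    omega
  -- parity sign facts
  have hsign : ∀ i ∈ M, (-1:ℝ)^i * p.eval (i:ℝ) < 0 := by
    intro i hi; simp only [hM, mem_filter] at hi; exact hi.2
  set S := (Finset.range (μ-1)).filter (fun k => b k % 2 = b (k+1) % 2) with hS
  set O := (Finset.range (μ-1)).filter (fun k => ¬ (b k % 2 = b (k+1) % 2)) with hO
  have hScard : S.card ≤ P.card := by
    apply Finset.card_le_card_of_injOn (fun k => b k + 1)
    · intro k hk
      simp only [hS, Finset.mem_coe, mem_filter, Finset.mem_range] at hk
      obtain ⟨hk1, hk2⟩ := hk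
      have hk1' : k + 1 < μ := by omega
      have hlt : b k < b (k+1) := hmono k (k+1) (by omega) hk1'
      have hgt2 : b k + 2 ≤ b (k+1) := by omega
      have hmemN : b (k+1) ∈ Finset.range N := Finset.mem_of_mem_filter _ (hmem _ hk1')
      rw [Finset.mem_range] at hmemN
      have hin : b k + 1 ∈ Finset.range N := by rw [Finset.mem_range]; omega
      exact hPM _ hin (hgap k hk1' (b k + 1) (by omega) (by omega))
    · intro k hk l hl hkl
      simp only [hS, Finset.coe_filter, Set.mem_setOf_eq, Finset.mem_range] at hk hl
      have : b k = b l := by simpa using hkl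
      by_contra hne
      rcases lt_or_gt_of_ne hne with h | h
      · have := hmono k l h (by omega); omega
      · have := hmono l k h (by omega); omega
  -- roots
  have hroot : ∀ k ∈ O, ∃ r : ℝ, r ∈ Set.Ioo ((b k : ℕ) : ℝ) ((b (k+1) : ℕ) : ℝ) ∧ p.eval r = 0 := by
    intro k hk
    simp only [hO, mem_filter, Finset.mem_range] at hk
    obtain ⟨hk1, hk2⟩ := hk
    have hk1' : k + 1 < μ := by omega
    have hlt : b k < b (k+1) := hmono k (k+1) (by omega) hk1'
    have hle : ((b k : ℕ) : ℝ) ≤ ((b (k+1) : ℕ) : ℝ) := by exact_mod_cast hlt.le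
    have h1 := hsign _ (hmem k (by omega))
    have h2 := hsign _ (hmem (k+1) hk1')
    have hcont : ContinuousOn (fun t : ℝ => p.eval t) (Set.Icc ((b k : ℕ) : ℝ) ((b (k+1) : ℕ):ℝ)) :=
      p.continuous.continuousOn
    rcases Nat.even_or_odd (b k) with he | ho
    · have hodd : Odd (b (k+1)) := by
        rw [Nat.even_iff] at he; rw [Nat.odd_iff]; omega
      rw [he.neg_one_pow, one_mul] at h1
      rw [hodd.neg_one_pow, neg_one_mul, neg_lt, neg_zero] at h2
      have : (0:ℝ) ∈ Set.Ioo (p.eval ((b k : ℕ):ℝ)) (p.eval ((b (k+1) : ℕ):ℝ)) := ⟨h1, h2⟩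
      obtain ⟨r, hr, hr0⟩ := intermediate_value_Ioo hle hcont this
      exact ⟨r, hr, hr0⟩
    · have heven : Even (b (k+1)) := by
        rw [Nat.odd_iff] at ho; rw [Nat.even_iff]; omega
      rw [ho.neg_one_pow, neg_one_mul, neg_lt, neg_zero] at h1
      rw [heven.neg_one_pow, one_mul] at h2
      have : (0:ℝ) ∈ Set.Ioo (p.eval ((b (k+1) : ℕ):ℝ)) (p.eval ((b k : ℕ):ℝ)) := ⟨h2, h1⟩
      obtain ⟨r, hr, hr0⟩ := intermediate_value_Ioo' hle hcont this
      exact ⟨r, hr, hr0⟩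
  classical
  set rt : ℕ → ℝ := fun k =>
    if h : ∃ r : ℝ, r ∈ Set.Ioo ((b k : ℕ) : ℝ) ((b (k+1) : ℕ) : ℝ) ∧ p.eval r = 0
    then h.choose else 0 with hrt
  have hrtspec : ∀ k ∈ O, rt k ∈ Set.Ioo ((b k : ℕ):ℝ) ((b (k+1) : ℕ):ℝ) ∧ p.eval (rt k) = 0 := by
    intro k hk
    have h := hroot k hk
    simp only [hrt, dif_pos h]
    exact h.choose_spec
  have hOcard : O.card ≤ d := by
    have h1 : O.card ≤ p.roots.toFinset.card := by
      apply Finset.card_le_card_of_injOn rt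
      · intro k hk
        obtain ⟨_, h0⟩ := hrtspec k hk
        rw [Finset.mem_coe, Multiset.mem_toFinset, Polynomial.mem_roots hp]
        exact h0
      · intro k hk l hl hkl
        by_contra hne
        have key : ∀ a c : ℕ, a ∈ O → c ∈ O → a < c → rt a < rt c := by
          intro a c ha hc hac
          obtain ⟨⟨_, ha2⟩, _⟩ := hrtspec a ha
          obtain ⟨⟨hc1, _⟩, _⟩ := hrtspec c hc
          simp only [hO, Finset.mem_filter, Finset.mem_range] at ha hc
          have h3 : b (a+1) ≤ b c := by
            rcases eq_or_lt_of_le (show a + 1 ≤ c by omega) with h | h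
            · rw [h]
            · exact (hmono _ _ h (by omega)).le
          have : ((b (a+1) : ℕ):ℝ) ≤ ((b c : ℕ):ℝ) := by exact_mod_cast h3
          linarith
        simp only [Finset.mem_coe] at hk hl
        rcases lt_or_gt_of_ne hne with h | h
        · exact absurd hkl (ne_of_lt (key k l hk hl h))
        · exact absurd hkl.symm (ne_of_lt (key l k hl hk h))
    calc O.card ≤ p.roots.toFinset.card := h1
      _ ≤ Multiset.card p.roots := Multiset.toFinset_card_le _
      _ ≤ p.natDegree := p.card_roots'
      _ ≤ d := hdeg
  have hSO : S.card + O.card = μ - 1 := by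
    have := Finset.filter_union_filter_not_eq (fun k => b k % 2 = b (k+1) % 2) (Finset.range (μ-1))
    have hd2 : Disjoint S O := by
      rw [Finset.disjoint_left]
      intro a haS haO
      simp only [hS, mem_filter] at haS
      simp only [hO, mem_filter] at haO
      exact haO.2 haS.2
    have := Finset.card_union_of_disjoint hd2
    rw [hS, hO] at this ⊢
    rw [← this]
    rw [Finset.filter_union_filter_not_eq, Finset.card_range]
  omega



lemma key_lemma (d n : ℕ) (hn : 1 ≤ n) (p : ℝ[X]) (hp : p ≠ 0)
    (hdeg : p.natDegree ≤ d) :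
    n ≤ ((Finset.range (d + 2*n)).filter fun i : ℕ => 0 < (-1:ℝ)^i * p.eval (i:ℝ)).card := by
  classical
  set N := d + 2*n with hN
  set Z := (Finset.range N).filter (fun i : ℕ => p.eval (i:ℝ) = 0) with hZ
  set g : ℝ[X] := Lagrange.interpolate Z (fun i : ℕ => (i:ℝ)) (fun i : ℕ => (-1:ℝ)^i) with hg
  have hginj : Set.InjOn (fun i : ℕ => (i:ℝ)) Z := fun a _ b _ h => Nat.cast_injective h
  have hgeval : ∀ i ∈ Z, g.eval (i:ℝ) = (-1:ℝ)^i := fun i hi =>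
    Lagrange.eval_interpolate_at_node _ hginj hi
  have hZd : Z.card ≤ d := by
    have h1 : Z.card ≤ p.roots.toFinset.card := by
      apply Finset.card_le_card_of_injOn (fun i : ℕ => (i:ℝ))
      · intro i hi
        simp only [hZ, Finset.mem_coe, Finset.mem_filter] at hi
        rw [Finset.mem_coe, Multiset.mem_toFinset, Polynomial.mem_roots hp]
        exact hi.2
      · intro a _ b _ h; exact Nat.cast_injective h
    calc Z.card ≤ p.roots.toFinset.card := h1
      _ ≤ Multiset.card p.roots := Multiset.toFinset_card_le _
      _ ≤ p.natDegree := p.card_roots'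
      _ ≤ d := hdeg
  have hgdeg : g.natDegree ≤ d := by
    rcases eq_or_ne g 0 with h | h
    · simp [h]
    · have := Lagrange.degree_interpolate_lt (r := fun i : ℕ => (-1:ℝ)^i) hginj
      rw [← hg] at this
      have h2 : g.degree < (Z.card : ℕ) := this
      have := Polynomial.natDegree_lt_iff_degree_lt (p := g) h |>.mpr (by exact_mod_cast h2)
      omega
  set T := (Finset.range N).filter (fun i : ℕ => p.eval (i:ℝ) ≠ 0) with hT
  have hTne : T.Nonempty := by
    by_contra h
    rw [Finset.not_nonempty_iff_eq_empty] at h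
    have hsub : Finset.range N ⊆ Z := by
      intro i hi
      simp only [hZ, Finset.mem_filter]
      refine ⟨hi, ?_⟩
      by_contra hne
      have : i ∈ T := by simp only [hT, Finset.mem_filter]; exact ⟨hi, hne⟩
      simp [h] at this
    have := Finset.card_le_card hsub
    rw [Finset.card_range] at this
    omega
  set ε : ℝ := T.inf' hTne (fun i : ℕ => |p.eval (i:ℝ)| / (|g.eval (i:ℝ)| + 1)) with hε
  have hεpos : 0 < ε := by
    rw [hε, Finset.lt_inf'_iff]
    intro i hi
    simp only [hT, Finset.mem_filter] at hi
    have h1 : 0 < |p.eval (i:ℝ)| := abs_pos.mpr hi.2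
    positivity
  have hbound : ∀ i ∈ T, ε * |g.eval (i:ℝ)| < |p.eval (i:ℝ)| := by
    intro i hi
    have h1 : ε ≤ |p.eval (i:ℝ)| / (|g.eval (i:ℝ)| + 1) := Finset.inf'_le _ hi
    simp only [hT, Finset.mem_filter] at hi
    have h2 : 0 < |p.eval (i:ℝ)| := abs_pos.mpr hi.2
    have h3 : (0:ℝ) ≤ |g.eval (i:ℝ)| := abs_nonneg _
    have h4 : ε * |g.eval (i:ℝ)| ≤ (|p.eval (i:ℝ)| / (|g.eval (i:ℝ)| + 1)) * |g.eval (i:ℝ)| :=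
      mul_le_mul_of_nonneg_right h1 h3
    have h5 : (|p.eval (i:ℝ)| / (|g.eval (i:ℝ)| + 1)) * |g.eval (i:ℝ)| < |p.eval (i:ℝ)| := by
      rw [div_mul_eq_mul_div, div_lt_iff₀ (by linarith)]
      nlinarith
    linarith
  set q : ℝ[X] := p - Polynomial.C ε * g with hq
  have hqdeg : q.natDegree ≤ d := by
    refine le_trans (Polynomial.natDegree_sub_le _ _) ?_
    exact max_le hdeg (le_trans (Polynomial.natDegree_C_mul_le _ _) hgdeg)
  have hqeval : ∀ i : ℕ, q.eval (i:ℝ) = p.eval (i:ℝ) - ε * g.eval (i:ℝ) := by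
    intro i; simp [hq]
  have hqZ : ∀ i ∈ Z, q.eval (i:ℝ) = -(ε * (-1:ℝ)^i) := by
    intro i hi
    rw [hqeval, hgeval i hi]
    simp only [hZ, Finset.mem_filter] at hi
    rw [hi.2]; ring
  have hqne : ∀ i ∈ Finset.range N, q.eval (i:ℝ) ≠ 0 := by
    intro i hi
    by_cases hpz : p.eval (i:ℝ) = 0
    · have hiZ : i ∈ Z := by simp only [hZ, Finset.mem_filter]; exact ⟨hi, hpz⟩
      rw [hqZ i hiZ]
      have : (-1:ℝ)^i ≠ 0 := by positivity
      intro h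
      rcases Nat.even_or_odd i with he | ho
      · rw [he.neg_one_pow] at h; simp at h; linarith
      · rw [ho.neg_one_pow] at h; simp at h; linarith
    · have hiT : i ∈ T := by simp only [hT, Finset.mem_filter]; exact ⟨hi, hpz⟩
      have hb := hbound i hiT
      rw [hqeval]
      intro h
      have : p.eval (i:ℝ) = ε * g.eval (i:ℝ) := by linarith
      rw [this] at hb
      rw [abs_mul, abs_of_pos hεpos] at hb
      nlinarith [abs_nonneg (g.eval (i:ℝ))]
  have hq0 : q ≠ 0 := by
    intro h
    have h0 : (0:ℕ) ∈ Finset.range N := by rw [Finset.mem_range]; omega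
    exact hqne 0 h0 (by rw [h]; simp)
  have hsub : ∀ i ∈ Finset.range N, 0 < (-1:ℝ)^i * q.eval (i:ℝ) → 0 < (-1:ℝ)^i * p.eval (i:ℝ) := by
    intro i hi hqpos
    by_cases hpz : p.eval (i:ℝ) = 0
    · exfalso
      have hiZ : i ∈ Z := by simp only [hZ, Finset.mem_filter]; exact ⟨hi, hpz⟩
      rw [hqZ i hiZ] at hqpos
      have h2 : (-1:ℝ)^i * -(ε * (-1:ℝ)^i) = -ε * ((-1:ℝ)^i * (-1:ℝ)^i) := by ring
      have h3 : (-1:ℝ)^i * (-1:ℝ)^i = 1 := by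
        rw [← pow_add]
        exact Even.neg_one_pow ⟨i, rfl⟩
      rw [h2, h3] at hqpos
      linarith
    · by_contra hple
      push_neg at hple
      have hiT : i ∈ T := by simp only [hT, Finset.mem_filter]; exact ⟨hi, hpz⟩
      have hb := hbound i hiT
      rw [hqeval] at hqpos
      have hεg : ε * g.eval (i:ℝ) ≤ ε * |g.eval (i:ℝ)| :=
        mul_le_mul_of_nonneg_left (le_abs_self _) hεpos.le
      have hεg' : -(ε * |g.eval (i:ℝ)|) ≤ ε * g.eval (i:ℝ) := by
        have := mul_le_mul_of_nonneg_left (neg_abs_le (g.eval (i:ℝ))) hεpos.le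
        linarith [this]
      rcases Nat.even_or_odd i with he | ho
      · rw [he.neg_one_pow, one_mul] at hqpos hple
        have habs : |p.eval (i:ℝ)| = -(p.eval (i:ℝ)) := abs_of_neg (lt_of_le_of_ne hple hpz)
        linarith
      · rw [ho.neg_one_pow, neg_one_mul] at hqpos hple
        have hppos : 0 < p.eval (i:ℝ) := by
          rcases lt_trichotomy (p.eval (i:ℝ)) 0 with h | h | h
          · exfalso; apply hpz; linarith [hple, h]
            -- hple : -(p.eval i) ≤ 0 means p.eval ≥ 0 contradiction with h
          · exact absurd h hpz
          · exact h
        have habs : |p.eval (i:ℝ)| = p.eval (i:ℝ) := abs_of_pos hppos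
        linarith
  have hkey := nz_lemma d n hn q hq0 hqdeg hqne
  refine le_trans hkey (Finset.card_le_card ?_)
  intro i hi
  simp only [Finset.mem_filter] at hi ⊢
  exact ⟨hi.1, hsub i hi.1 hi.2⟩


-- the linear "moment" functional
def momFun (d : ℕ) (i : ℕ) (x : EuclideanSpace ℝ (Fin (d + 1))) : ℝ :=
  (-1:ℝ)^i * ∑ j : Fin (d+1), x j * (i:ℝ)^(j:ℕ)

-- the polynomial attached to a point
def momPoly (d : ℕ) (x : EuclideanSpace ℝ (Fin (d + 1))) : ℝ[X] :=
  ∑ j : Fin (d+1), Polynomial.C (x j) * Polynomial.X ^ (j:ℕ)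

lemma momPoly_eval (d : ℕ) (x : EuclideanSpace ℝ (Fin (d + 1))) (t : ℝ) :
    (momPoly d x).eval t = ∑ j : Fin (d+1), x j * t^(j:ℕ) := by
  simp [momPoly, Polynomial.eval_finset_sum]

lemma momPoly_natDegree (d : ℕ) (x : EuclideanSpace ℝ (Fin (d + 1))) :
    (momPoly d x).natDegree ≤ d := by
  refine Polynomial.natDegree_sum_le_of_forall_le _ _ ?_
  intro j _
  exact le_trans (Polynomial.natDegree_C_mul_X_pow_le _ _) (by omega)

lemma momPoly_coeff (d : ℕ) (x : EuclideanSpace ℝ (Fin (d + 1))) (j₀ : Fin (d+1)) :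
    (momPoly d x).coeff (j₀:ℕ) = x j₀ := by
  rw [momPoly, Polynomial.finset_sum_coeff]
  rw [Finset.sum_eq_single j₀]
  · simp
  · intro j _ hne
    rw [Polynomial.coeff_C_mul, Polynomial.coeff_X_pow]
    rw [if_neg (by simpa [Fin.val_eq_val] using (Ne.symm hne))]
    ring
  · intro h; exact absurd (Finset.mem_univ _) h

lemma momPoly_ne_zero (d : ℕ) (x : EuclideanSpace ℝ (Fin (d + 1))) (hx : x ≠ 0) :
    momPoly d x ≠ 0 := by
  intro h
  apply hx
  ext j
  have := momPoly_coeff d x j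
  rw [h] at this
  simpa using this.symm

lemma momPoly_neg (d : ℕ) (x : EuclideanSpace ℝ (Fin (d + 1))) :
    momPoly d (-x) = -(momPoly d x) := by
  rw [momPoly, momPoly, ← Finset.sum_neg_distrib]
  congr 1
  funext j
  have : (-x) j = -(x j) := rfl
  rw [this]
  simp


/-- Upper bound of Theorem 2: `Q(d,n) ≤ d + n`. There is an antipodal `n`-fold cover
of `S^d` with `d + 2n` open sets in which every point is covered at most `d + n` times. -/
theorem Q_upper_bound (d n : ℕ) (hd : 1 ≤ d) (hn : 1 ≤ n) :
    ∃ F : Fin (d + 2 * n) → Set (EuclideanSpace ℝ (Fin (d + 1))),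
      IsNFoldCover n F ∧ IsAntipodalFamily F ∧
        ∀ x ∈ sphereSet d, covCount F x ≤ d + n := by
  classical
  set N := d + 2 * n with hN
  have hcont : ∀ i : ℕ, Continuous (momFun d i) := by
    intro i
    apply Continuous.mul continuous_const
    exact continuous_finset_sum _ fun j _ => ((continuous_apply j).comp (PiLp.continuous_ofLp ..)).mul continuous_const
  have hmomFun : ∀ (i : ℕ) (x : EuclideanSpace ℝ (Fin (d+1))),
      momFun d i x = (-1:ℝ)^i * (momPoly d x).eval (i:ℝ) := by
    intro i x; rw [momPoly_eval]; rfl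
  have hmomNeg : ∀ (i : ℕ) (x : EuclideanSpace ℝ (Fin (d+1))),
      momFun d i (-x) = -(momFun d i x) := by
    intro i x
    rw [hmomFun, hmomFun, momPoly_neg]
    simp
  set F : Fin N → Set (EuclideanSpace ℝ (Fin (d + 1))) :=
    fun i => {x | 0 < momFun d (i:ℕ) x} ∩ sphereSet d with hF
  have hxne : ∀ x ∈ sphereSet d, x ≠ 0 := by
    intro x hx
    have : ‖x‖ = 1 := by
      rw [sphereSet, mem_sphere_zero_iff_norm] at hx; exact hx
    intro h; rw [h] at this; simp at this
  have hcov : ∀ x ∈ sphereSet d, covCount F x =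
      ((Finset.range N).filter fun i : ℕ => 0 < momFun d i x).card := by
    intro x hx
    rw [covCount, Nat.card_eq_fintype_card, Fintype.card_subtype]
    apply Finset.card_nbij (fun i : Fin N => (i:ℕ))
    · intro a ha
      simp only [Finset.mem_coe, Finset.mem_filter, Finset.mem_univ, true_and, hF, Set.mem_inter_iff,
        Set.mem_setOf_eq] at ha
      simp only [Finset.mem_coe, Finset.mem_filter, Finset.mem_range]
      exact ⟨a.isLt, ha.1⟩
    · intro a _ b _ h
      exact Fin.val_injective h
    · intro a ha
      simp only [Finset.coe_filter, Set.mem_setOf_eq, Finset.mem_range] at ha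
      refine ⟨⟨a, ha.1⟩, ?_, rfl⟩
      simp only [Finset.coe_filter, Finset.mem_univ, true_and, Set.mem_setOf_eq, hF,
        Set.mem_inter_iff]
      exact ⟨ha.2, hx⟩
  have hfilter : ∀ x : EuclideanSpace ℝ (Fin (d+1)),
      ((Finset.range N).filter fun i : ℕ => 0 < momFun d i x) =
      ((Finset.range N).filter fun i : ℕ => 0 < (-1:ℝ)^i * (momPoly d x).eval (i:ℝ)) := by
    intro x
    apply Finset.filter_congr
    intro i _
    rw [hmomFun]
  have hlower : ∀ x ∈ sphereSet d, n ≤ covCount F x := by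
    intro x hx
    rw [hcov x hx, hfilter]
    exact key_lemma d n hn _ (momPoly_ne_zero d x (hxne x hx)) (momPoly_natDegree d x)
  have hupper : ∀ x ∈ sphereSet d, covCount F x ≤ d + n := by
    intro x hx
    have hnegx : (-x : EuclideanSpace ℝ (Fin (d+1))) ≠ 0 := by
      intro h
      apply hxne x hx
      simpa using congrArg Neg.neg h
    have hkey2 : n ≤ ((Finset.range N).filter fun i : ℕ => 0 < momFun d i (-x)).card := by
      rw [hfilter]
      exact key_lemma d n hn _ (momPoly_ne_zero d (-x) hnegx) (momPoly_natDegree d (-x))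
    have hdisj : Disjoint ((Finset.range N).filter fun i : ℕ => 0 < momFun d i x)
        ((Finset.range N).filter fun i : ℕ => 0 < momFun d i (-x)) := by
      rw [Finset.disjoint_left]
      intro i h1 h2
      simp only [Finset.mem_filter] at h1 h2
      rw [hmomNeg] at h2
      linarith [h1.2, h2.2]
    have hsum : ((Finset.range N).filter fun i : ℕ => 0 < momFun d i x).card +
        ((Finset.range N).filter fun i : ℕ => 0 < momFun d i (-x)).card ≤ N := by
      rw [← Finset.card_union_of_disjoint hdisj]
      refine le_trans (Finset.card_le_card (Finset.union_subset
        (Finset.filter_subset _ _) (Finset.filter_subset _ _))) ?_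
      rw [Finset.card_range]
    rw [hcov x hx]
    omega
  refine ⟨F, ⟨fun i => Set.inter_subset_right, fun i => ⟨{x | 0 < momFun d (i:ℕ) x},
    isOpen_lt continuous_const (hcont (i:ℕ)), rfl⟩, hlower⟩, ?_, hupper⟩
  intro i x hx1 hx2
  simp only [hF, Set.mem_inter_iff, Set.mem_setOf_eq] at hx1 hx2
  rw [hmomNeg] at hx2
  linarith [hx1.1, hx2.1]
end
end

section
/- Let d ≥ 1 and m > n ≥ 1. There exists an antipodal (n,m)-closed-hemisphere-fold cover of S^d consisting of d + 2m − 1 open sets. (Upper bound of Theorem 3: f̄(d,n,m) ≤ d + 2m − 1.) -/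
noncomputable section

open scoped RealInnerProductSpace

section AuxCover

open Polynomial Filter
open scoped Classical


/-- helper: split filtered cards over disjoint sub-predicates -/
lemma msplit {s : Multiset ℝ} (A B C : ℝ → Prop) [DecidablePred A] [DecidablePred B] [DecidablePred C]
    (hAC : ∀ r, A r → C r) (hBC : ∀ r, B r → C r) (hAB : ∀ r, ¬(A r ∧ B r)) :
    (s.filter A).card + (s.filter B).card ≤ (s.filter C).card := by
  rw [← Multiset.card_add]
  refine Multiset.card_le_card ?_
  rw [Multiset.le_iff_count]
  intro r
  rw [Multiset.count_add, Multiset.count_filter, Multiset.count_filter, Multiset.count_filter]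
  by_cases hA : A r
  · by_cases hB : B r
    · exact absurd ⟨hA, hB⟩ (hAB r)
    · simp [hA, hB, hAC r hA]
  · by_cases hB : B r
    · simp [hA, hB, hBC r hB]
    · simp [hA, hB]

/-- helper: many distinct points satisfying A, all in s, give card lower bound -/
lemma many_mem {s : Multiset ℝ} (A : ℝ → Prop) [DecidablePred A] (g : ℕ) (u : ℕ → ℝ)
    (hinj : ∀ i j, i < g → j < g → u i = u j → i = j)
    (hm : ∀ l, l < g → u l ∈ s ∧ A (u l)) :
    g ≤ (s.filter A).card := by
  have himg : (Finset.range g).image u ⊆ (s.filter A).toFinset := by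
    intro r hr
    simp only [Finset.mem_image, Finset.mem_range] at hr
    obtain ⟨l, hl, rfl⟩ := hr
    rw [Multiset.mem_toFinset, Multiset.mem_filter]
    exact ⟨(hm l hl).1, (hm l hl).2⟩
  have h1 : ((Finset.range g).image u).card = g := by
    rw [Finset.card_image_of_injOn, Finset.card_range]
    intro i hi j hj h
    exact hinj i j (Finset.mem_range.mp hi) (Finset.mem_range.mp hj) h
  calc g = ((Finset.range g).image u).card := h1.symm
    _ ≤ (s.filter A).toFinset.card := Finset.card_le_card himg
    _ ≤ (s.filter A).card := Multiset.toFinset_card_le _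

/-- parity lemma: sign of p(a)*p(b) is determined by parity of number of roots
(with multiplicity) in (a,b). -/
lemma lemB (p : Polynomial ℝ) {a b : ℝ} (hab : a < b)
    (ha : p.eval a ≠ 0) (hb : p.eval b ≠ 0) :
    (Even (p.roots.filter (fun r => a < r ∧ r < b)).card ↔ 0 < p.eval a * p.eval b) := by
  have hp : p ≠ 0 := fun h => ha (by simp [h])
  generalize hn : (p.roots.filter (fun r => a < r ∧ r < b)).card = n
  induction n using Nat.strong_induction_on generalizing p a b with
  | _ n ih =>
    rcases Nat.eq_zero_or_pos n with h0 | hpos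
    · subst h0
      simp only [Even.zero, true_iff]
      -- no roots in (a,b): same sign
      by_contra hle
      push_neg at hle
      have hne : p.eval a * p.eval b ≠ 0 := mul_ne_zero ha hb
      have hlt : p.eval a * p.eval b < 0 := lt_of_le_of_ne hle hne
      have hcont : ContinuousOn (fun x => p.eval x) (Set.Icc a b) := (Polynomial.continuous p).continuousOn
      have : ∃ c ∈ Set.Ioo a b, p.eval c = 0 := by
        rcases mul_neg_iff.mp hlt with ⟨hpa, hpb⟩ | ⟨hpa, hpb⟩
        · have h0 : (0:ℝ) ∈ Set.Ioo (p.eval b) (p.eval a) := ⟨hpb, hpa⟩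
          obtain ⟨c, hc, hc0⟩ := intermediate_value_Ioo' hab.le hcont h0
          exact ⟨c, hc, hc0⟩
        · have h0 : (0:ℝ) ∈ Set.Ioo (p.eval a) (p.eval b) := ⟨hpa, hpb⟩
          obtain ⟨c, hc, hc0⟩ := intermediate_value_Ioo hab.le hcont h0
          exact ⟨c, hc, hc0⟩
      obtain ⟨c, hc, hc0⟩ := this
      have hcr : c ∈ p.roots.filter (fun r => a < r ∧ r < b) := by
        rw [Multiset.mem_filter]
        exact ⟨(Polynomial.mem_roots hp).mpr hc0, hc.1, hc.2⟩
      have := Multiset.card_pos_iff_exists_mem.mpr ⟨c, hcr⟩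
      omega
    · -- there is a root r in (a,b)
      have hmem : ∃ r, r ∈ p.roots.filter (fun r => a < r ∧ r < b) := by
        apply Multiset.card_pos_iff_exists_mem.mp; omega
      obtain ⟨r, hr⟩ := hmem
      rw [Multiset.mem_filter] at hr
      obtain ⟨hroot, har, hrb⟩ := hr
      have hisroot : p.IsRoot r := (Polynomial.mem_roots hp).mp hroot
      obtain ⟨q, hq⟩ := Polynomial.dvd_iff_isRoot.mpr hisroot
      have hq0 : q ≠ 0 := by rintro rfl; simp at hq; exact hp hq
      have hqa : q.eval a ≠ 0 := by
        intro h; apply ha; rw [hq]; simp [h]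
      have hqb : q.eval b ≠ 0 := by
        intro h; apply hb; rw [hq]; simp [h]
      have hroots : p.roots = r ::ₘ q.roots := by
        rw [hq, Polynomial.roots_mul (hq ▸ hp), Polynomial.roots_X_sub_C]
        simp
      have hcard : (q.roots.filter (fun r => a < r ∧ r < b)).card = n - 1 := by
        have : (p.roots.filter (fun r => a < r ∧ r < b)).card
            = (q.roots.filter (fun r => a < r ∧ r < b)).card + 1 := by
          rw [hroots, Multiset.filter_cons]
          simp [har, hrb]
        omega
      have hih := ih (n-1) (by omega) q (a:=a) (b:=b) hab hqa hqb hq0 hcard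
      have heva : p.eval a = (a - r) * q.eval a := by rw [hq]; simp
      have hevb : p.eval b = (b - r) * q.eval b := by rw [hq]; simp
      have hsign : p.eval a * p.eval b = ((a - r) * (b - r)) * (q.eval a * q.eval b) := by
        rw [heva, hevb]; ring
      have habr : (a - r) * (b - r) < 0 := mul_neg_of_neg_of_pos (by linarith) (by linarith)
      have key : 0 < p.eval a * p.eval b ↔ ¬ (0 < q.eval a * q.eval b) := by
        rw [hsign]
        constructor
        · intro h hq'
          nlinarith
        · intro h
          have hne : q.eval a * q.eval b ≠ 0 := mul_ne_zero hqa hqb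
          have : q.eval a * q.eval b < 0 := lt_of_le_of_ne (not_lt.mp h) hne
          nlinarith
      rw [key]
      have h1 : n = (n - 1) + 1 := by omega
      rw [h1, Nat.even_add_one]
      exact not_congr hih

lemma eps_shift (ε : ℕ → ℝ) (halt : ∀ i, ε (i+1) = -ε i) (a : ℕ) :
    ∀ n : ℕ, ε (a + n) = (-1)^n * ε a := by
  intro n
  induction n with
  | zero => simp
  | succ n ihn =>
    have h : a + (n+1) = (a + n) + 1 := by omega
    rw [h, halt, ihn, pow_succ]
    ring

lemma lemD (p : Polynomial ℝ) (hp : p ≠ 0) (ε t : ℕ → ℝ)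
    (hε1 : ∀ i, ε i = 1 ∨ ε i = -1) (halt : ∀ i, ε (i+1) = -ε i) (ht : StrictMono t) :
    ∀ L : ℕ, L + (if ∃ j, j ≤ L ∧ 0 < ε j * p.eval (t j) ∧
          (∀ l, j < l → l ≤ L → p.eval (t l) = 0) then 1 else 0)
      ≤ 2 * ((Finset.range (L+1)).filter (fun i => 0 < ε i * p.eval (t i))).card
        + (p.roots.filter (fun r => t 0 ≤ r ∧ r ≤ t L)).card := by
  have hεne : ∀ i, ε i ≠ 0 := by
    intro i; rcases hε1 i with h | h <;> rw [h] <;> norm_num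
  have hQne : ∀ j, 0 < ε j * p.eval (t j) → p.eval (t j) ≠ 0 := by
    intro j hj h0; rw [h0, mul_zero] at hj; exact lt_irrefl 0 hj
  intro L
  induction L using Nat.strong_induction_on with
  | _ L ih =>
  rcases Nat.eq_zero_or_pos L with rfl | hLpos
  · -- base case L = 0
    split
    · next hLP =>
      obtain ⟨j, hj0, hQ, -⟩ := hLP
      obtain rfl : j = 0 := by omega
      have hm : (0:ℕ) ∈ (Finset.range (0+1)).filter (fun i => 0 < ε i * p.eval (t i)) := by
        simp [hQ]
      have := Finset.card_pos.mpr ⟨0, hm⟩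
      omega
    · omega
  obtain ⟨M, rfl⟩ : ∃ M, L = M + 1 := ⟨L - 1, by omega⟩
  have ihM := ih M (by omega)
  rcases lt_trichotomy (ε (M+1) * p.eval (t (M+1))) 0 with hneg | hzero | hpos
  · -- last point is minus
    have hevne : p.eval (t (M+1)) ≠ 0 := by
      intro h0; rw [h0, mul_zero] at hneg; exact lt_irrefl 0 hneg
    have hψ : ¬ (∃ j, j ≤ M+1 ∧ 0 < ε j * p.eval (t j) ∧
        (∀ l, j < l → l ≤ M+1 → p.eval (t l) = 0)) := by
      rintro ⟨j, hj, hQ, hz⟩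
      rcases Nat.lt_or_ge j (M+1) with hlt | hge
      · exact hevne (hz (M+1) hlt (le_refl _))
      · have hje : j = M+1 := by omega
        subst hje
        exact absurd hQ (by rw [not_lt]; exact hneg.le)
    rw [if_neg hψ]
    set A := (Finset.range (M+1)).filter (fun j => p.eval (t j) ≠ 0) with hA
    rcases A.eq_empty_or_nonempty with hemp | hne
    · -- all earlier points are zeros
      have hall : ∀ j, j ≤ M → p.eval (t j) = 0 := by
        intro j hj
        by_contra h
        have hjA : j ∈ A := Finset.mem_filter.mpr ⟨Finset.mem_range.mpr (by omega), h⟩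
        rw [hemp] at hjA
        exact absurd hjA (Finset.notMem_empty j)
      have hR : M + 1 ≤ (p.roots.filter (fun r => t 0 ≤ r ∧ r ≤ t (M+1))).card := by
        apply many_mem _ (M+1) t
        · intro i j _ _ hij; exact ht.injective hij
        · intro l hl
          exact ⟨(Polynomial.mem_roots hp).mpr (hall l (by omega)),
            ht.monotone (by omega), ht.monotone (by omega)⟩
      omega
    · -- a = last nonzero position before M+1
      set a := A.max' hne with ha
      have haA : a ∈ A := A.max'_mem hne
      have haM : a ≤ M := by
        have hh := (Finset.mem_filter.mp haA).1; rw [Finset.mem_range] at hh; omega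
      have hane : p.eval (t a) ≠ 0 := (Finset.mem_filter.mp haA).2
      have hmax : ∀ l, a < l → l ≤ M → p.eval (t l) = 0 := by
        intro l hal hlM
        by_contra h
        have hlA : l ∈ A := Finset.mem_filter.mpr ⟨Finset.mem_range.mpr (by omega), h⟩
        have := A.le_max' l hlA
        omega
      have hP : ((Finset.range (M+1+1)).filter (fun i => 0 < ε i * p.eval (t i))).card
          = ((Finset.range (a+1)).filter (fun i => 0 < ε i * p.eval (t i))).card := by
        congr 1
        apply Finset.ext
        intro j
        simp only [Finset.mem_filter, Finset.mem_range]
        constructor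
        · rintro ⟨hj, hQ⟩
          refine ⟨?_, hQ⟩
          by_contra hja
          have hja' : a < j := by omega
          rcases Nat.lt_or_ge j (M+1) with h1 | h1
          · exact hQne j hQ (hmax j hja' (by omega))
          · have hje : j = M+1 := by omega
            subst hje
            exact absurd hQ (by rw [not_lt]; exact hneg.le)
        · rintro ⟨hj, hQ⟩; exact ⟨by omega, hQ⟩
      have iha := ih a (by omega)
      have hzl : ∀ l, l < M - a → (t (a+1+l) ∈ p.roots ∧ t a < t (a+1+l) ∧ t (a+1+l) < t (M+1)) := by
        intro l hl
        exact ⟨(Polynomial.mem_roots hp).mpr (hmax (a+1+l) (by omega) (by omega)),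
          ht (by omega), ht (by omega)⟩
      have hεa : ε a * p.eval (t a) ≠ 0 := mul_ne_zero (hεne a) hane
      rcases hεa.lt_or_gt with haneg | hapos
      · -- sigma_a = '-' : parity argument
        set C := (p.roots.filter (fun r => t a < r ∧ r < t (M+1))).card with hC
        have hCg : M - a ≤ C := by
          apply many_mem _ (M-a) (fun l => t (a+1+l))
          · intro i j _ _ hij
            have := ht.injective hij; omega
          · intro l hl
            exact hzl l hl
        have hpar : Even C ↔ 0 < p.eval (t a) * p.eval (t (M+1)) :=
          lemB p (ht (by omega)) hane hevne
        have hshift : ε (M+1) = (-1)^(M+1-a) * ε a := by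
          have hh := eps_shift ε halt a (M+1-a)
          rwa [show a + (M+1-a) = M+1 by omega] at hh
        have hsq : ε a * ε a = 1 := by
          rcases hε1 a with h | h <;> rw [h] <;> norm_num
        have hprodpos : 0 < (ε a * p.eval (t a)) * (ε (M+1) * p.eval (t (M+1))) :=
          mul_pos_of_neg_of_neg haneg hneg
        have hsigniff : 0 < p.eval (t a) * p.eval (t (M+1)) ↔ Even (M+1-a) := by
          rw [hshift] at hprodpos
          rcases Nat.even_or_odd (M+1-a) with he | ho
          · rw [he.neg_one_pow] at hprodpos
            exact ⟨fun _ => he, fun _ => by nlinarith⟩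
          · rw [ho.neg_one_pow] at hprodpos
            exact ⟨fun h' => absurd h' (by nlinarith), fun h' => absurd h' (Nat.not_even_iff_odd.mpr ho)⟩
        have hCne : C ≠ M - a := by
          intro hcc
          have h1 : Even C ↔ Even (M+1-a) := hpar.trans hsigniff
          rw [Nat.even_iff, Nat.even_iff] at h1
          omega
        have hsplit : (p.roots.filter (fun r => t 0 ≤ r ∧ r ≤ t a)).card + C
            ≤ (p.roots.filter (fun r => t 0 ≤ r ∧ r ≤ t (M+1))).card := by
          apply msplit
          · rintro r ⟨h1, h2⟩
            exact ⟨h1, le_trans h2 (ht.monotone (by omega))⟩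
          · rintro r ⟨h1, h2⟩
            exact ⟨le_trans (ht.monotone (by omega : (0:ℕ) ≤ a)) h1.le, h2.le⟩
          · rintro r ⟨⟨-, h2⟩, ⟨h3, -⟩⟩
            exact absurd h2 (not_le.mpr h3)
        omega
      · -- sigma_a = '+'
        have hLPa : (∃ j, j ≤ a ∧ 0 < ε j * p.eval (t j) ∧
            (∀ l, j < l → l ≤ a → p.eval (t l) = 0)) :=
          ⟨a, le_refl _, hapos, fun l h1 h2 => absurd h1 (by omega)⟩
        rw [if_pos hLPa] at iha
        have hB : M - a ≤ (p.roots.filter (fun r => t a < r ∧ r ≤ t (M+1))).card := by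
          apply many_mem _ (M-a) (fun l => t (a+1+l))
          · intro i j _ _ hij
            have := ht.injective hij; omega
          · intro l hl
            obtain ⟨h1, h2, h3⟩ := hzl l hl
            exact ⟨h1, h2, h3.le⟩
        have hsplit : (p.roots.filter (fun r => t 0 ≤ r ∧ r ≤ t a)).card
              + (p.roots.filter (fun r => t a < r ∧ r ≤ t (M+1))).card
            ≤ (p.roots.filter (fun r => t 0 ≤ r ∧ r ≤ t (M+1))).card := by
          apply msplit
          · rintro r ⟨h1, h2⟩
            exact ⟨h1, le_trans h2 (ht.monotone (by omega))⟩
          · rintro r ⟨h1, h2⟩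
            exact ⟨le_trans (ht.monotone (by omega : (0:ℕ) ≤ a)) h1.le, h2⟩
          · rintro r ⟨⟨-, h2⟩, ⟨h3, -⟩⟩
            exact absurd h2 (not_le.mpr h3)
        omega
  · -- last point is a zero of p
    have hev0 : p.eval (t (M+1)) = 0 := by
      rcases mul_eq_zero.mp hzero with h | h
      · exact absurd h (hεne (M+1))
      · exact h
    have hψeq : (∃ j, j ≤ M+1 ∧ 0 < ε j * p.eval (t j) ∧
          (∀ l, j < l → l ≤ M+1 → p.eval (t l) = 0))
        ↔ (∃ j, j ≤ M ∧ 0 < ε j * p.eval (t j) ∧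
          (∀ l, j < l → l ≤ M → p.eval (t l) = 0)) := by
      constructor
      · rintro ⟨j, hj, hQ, hz⟩
        have hjM : j ≤ M := by
          rcases Nat.lt_or_ge j (M+1) with h | h
          · omega
          · exfalso
            have hje : j = M+1 := by omega
            subst hje
            exact hQne _ hQ hev0
        exact ⟨j, hjM, hQ, fun l h1 h2 => hz l h1 (by omega)⟩
      · rintro ⟨j, hj, hQ, hz⟩
        refine ⟨j, by omega, hQ, fun l h1 h2 => ?_⟩
        rcases Nat.lt_or_ge l (M+1) with h | h
        · exact hz l h1 (by omega)
        · have hle : l = M+1 := by omega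
          subst hle; exact hev0
    have hP : ((Finset.range (M+1+1)).filter (fun i => 0 < ε i * p.eval (t i))).card
        = ((Finset.range (M+1)).filter (fun i => 0 < ε i * p.eval (t i))).card := by
      congr 1
      apply Finset.ext
      intro j
      simp only [Finset.mem_filter, Finset.mem_range]
      constructor
      · rintro ⟨hj, hQ⟩
        refine ⟨?_, hQ⟩
        by_contra h
        have hje : j = M+1 := by omega
        subst hje
        exact hQne _ hQ hev0
      · rintro ⟨hj, hQ⟩; exact ⟨by omega, hQ⟩
    have hBone : 1 ≤ (p.roots.filter (fun r => t M < r ∧ r ≤ t (M+1))).card := by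
      have hm : t (M+1) ∈ p.roots.filter (fun r => t M < r ∧ r ≤ t (M+1)) :=
        Multiset.mem_filter.mpr ⟨(Polynomial.mem_roots hp).mpr hev0, ht (by omega), le_refl _⟩
      exact Multiset.card_pos_iff_exists_mem.mpr ⟨_, hm⟩
    have hsplit : (p.roots.filter (fun r => t 0 ≤ r ∧ r ≤ t M)).card
          + (p.roots.filter (fun r => t M < r ∧ r ≤ t (M+1))).card
        ≤ (p.roots.filter (fun r => t 0 ≤ r ∧ r ≤ t (M+1))).card := by
      apply msplit
      · rintro r ⟨h1, h2⟩
        exact ⟨h1, le_trans h2 (ht.monotone (by omega))⟩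
      · rintro r ⟨h1, h2⟩
        exact ⟨le_trans (ht.monotone (by omega : (0:ℕ) ≤ M)) h1.le, h2⟩
      · rintro r ⟨⟨-, h2⟩, ⟨h3, -⟩⟩
        exact absurd h2 (not_le.mpr h3)
    simp only [hψeq]
    omega
  · -- last point is plus
    have hif : (if ∃ j, j ≤ M+1 ∧ 0 < ε j * p.eval (t j) ∧
        (∀ l, j < l → l ≤ M+1 → p.eval (t l) = 0) then 1 else 0) ≤ 1 := by
      split <;> omega
    have hPM : ((Finset.range (M+1)).filter (fun i => 0 < ε i * p.eval (t i))).card + 1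
        ≤ ((Finset.range (M+1+1)).filter (fun i => 0 < ε i * p.eval (t i))).card := by
      have hnm : (M+1) ∉ (Finset.range (M+1)).filter (fun i => 0 < ε i * p.eval (t i)) := by
        simp [Finset.mem_filter]
      have hsub : insert (M+1) ((Finset.range (M+1)).filter (fun i => 0 < ε i * p.eval (t i)))
          ⊆ (Finset.range (M+1+1)).filter (fun i => 0 < ε i * p.eval (t i)) := by
        intro j hj
        rcases Finset.mem_insert.mp hj with rfl | hj'
        · exact Finset.mem_filter.mpr ⟨Finset.mem_range.mpr (by omega), hpos⟩
        · have := Finset.mem_filter.mp hj'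
          exact Finset.mem_filter.mpr ⟨Finset.mem_range.mpr (by
            have := Finset.mem_range.mp this.1; omega), this.2⟩
      calc _ = (insert (M+1) ((Finset.range (M+1)).filter (fun i => 0 < ε i * p.eval (t i)))).card := by
              rw [Finset.card_insert_of_notMem hnm]
        _ ≤ _ := Finset.card_le_card hsub
    have hR : (p.roots.filter (fun r => t 0 ≤ r ∧ r ≤ t M)).card
        ≤ (p.roots.filter (fun r => t 0 ≤ r ∧ r ≤ t (M+1))).card := by
      apply Multiset.card_le_card
      apply Multiset.monotone_filter_right
      rintro r ⟨h1, h2⟩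
      exact ⟨h1, le_trans h2 (ht.monotone (by omega))⟩
    omega

lemma count_ge (D k : ℕ) (hk : 1 ≤ k) (p : Polynomial ℝ) (hp : p ≠ 0) (hdeg : p.natDegree ≤ D)
    (ε : ℕ → ℝ) (hε1 : ∀ i, ε i = 1 ∨ ε i = -1) (halt : ∀ i, ε (i+1) = -ε i) :
    k ≤ 2 * ((Finset.range k).filter (fun i => 0 < ε i * p.eval (i:ℝ))).card + D + 1 := by
  obtain ⟨L, rfl⟩ : ∃ L, k = L + 1 := ⟨k-1, by omega⟩
  have h := lemD p hp ε (fun i => (i:ℝ)) hε1 halt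
    (fun i j hij => by simpa using (Nat.cast_lt (α := ℝ)).mpr hij) L
  have hR : (p.roots.filter (fun r => ((0:ℕ):ℝ) ≤ r ∧ r ≤ ((L:ℕ):ℝ))).card ≤ D :=
    le_trans (le_trans (Multiset.card_le_card (Multiset.filter_le _ _))
      (Polynomial.card_roots' p)) hdeg
  omega

lemma count_ge_north (D k : ℕ) (p : Polynomial ℝ) (hp : p ≠ 0) (hdeg : p.natDegree ≤ D)
    (ε : ℕ → ℝ) (hε1 : ∀ i, ε i = 1 ∨ ε i = -1) (halt : ∀ i, ε (i+1) = -ε i)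
    (hεk : ε k = -1) (T : ℝ) (hT : (k:ℝ) ≤ T) (hpT : 0 < p.eval T) :
    k ≤ 2 * ((Finset.range k).filter (fun i => 0 < ε i * p.eval (i:ℝ))).card + D := by
  set t : ℕ → ℝ := fun i => if i < k then (i:ℝ) else T + ((i - k : ℕ) : ℝ) with htdef
  have ht : StrictMono t := by
    intro i j hij
    by_cases hi : i < k
    · by_cases hj : j < k
      · simp only [htdef, if_pos hi, if_pos hj]
        exact_mod_cast hij
      · simp only [htdef, if_pos hi, if_neg hj]
        have h1 : (i:ℝ) < (k:ℝ) := by exact_mod_cast hi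
        have h2 : (k:ℝ) ≤ T + ((j - k : ℕ) : ℝ) := by
          have : (0:ℝ) ≤ ((j - k : ℕ) : ℝ) := Nat.cast_nonneg _
          linarith
        linarith
    · have hj : ¬ j < k := by omega
      simp only [htdef, if_neg hi, if_neg hj]
      have : ((i - k : ℕ) : ℝ) < ((j - k : ℕ) : ℝ) := by
        exact_mod_cast (by omega : i - k < j - k)
      linarith
  have h := lemD p hp ε t hε1 halt ht k
  have htk : t k = T := by
    simp [htdef]
  have htj : ∀ j, j < k → t j = (j:ℝ) := by
    intro j hj; simp [htdef, hj]
  have hfil : (Finset.range (k+1)).filter (fun i => 0 < ε i * p.eval (t i))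
      = (Finset.range k).filter (fun i => 0 < ε i * p.eval (i:ℝ)) := by
    apply Finset.ext
    intro j
    simp only [Finset.mem_filter, Finset.mem_range]
    constructor
    · rintro ⟨hj, hQ⟩
      have hjk : j < k := by
        by_contra hc
        have : j = k := by omega
        subst this
        rw [htk, hεk] at hQ
        nlinarith
      refine ⟨hjk, ?_⟩
      rwa [htj j hjk] at hQ
    · rintro ⟨hj, hQ⟩
      refine ⟨by omega, ?_⟩
      rw [← htj j hj] at hQ; exact hQ
  rw [hfil] at h
  have hR : (p.roots.filter (fun r => t 0 ≤ r ∧ r ≤ t k)).card ≤ D :=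
    le_trans (le_trans (Multiset.card_le_card (Multiset.filter_le _ _))
      (Polynomial.card_roots' p)) hdeg
  omega

def covEps (k : ℕ) : ℕ → ℝ := fun i => (-1)^(i + k + 1)

lemma covEps_pm (k i : ℕ) : covEps k i = 1 ∨ covEps k i = -1 := by
  rcases Nat.even_or_odd (i + k + 1) with h | h
  · left; exact h.neg_one_pow
  · right; exact h.neg_one_pow

lemma covEps_alt (k i : ℕ) : covEps k (i+1) = -covEps k i := by
  unfold covEps
  rw [show i + 1 + k + 1 = (i + k + 1) + 1 by omega, pow_succ]
  ring

lemma covEps_k (k : ℕ) : covEps k k = -1 := by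
  unfold covEps
  exact (by exact ⟨k, by omega⟩ : Odd (k + k + 1)).neg_one_pow

def covPoly (d : ℕ) (x : EuclideanSpace ℝ (Fin (d+1))) : Polynomial ℝ :=
  ∑ j : Fin (d+1), Polynomial.monomial (j:ℕ) (x j)

lemma covPoly_coeff (d : ℕ) (x : EuclideanSpace ℝ (Fin (d+1))) (N : ℕ) :
    (covPoly d x).coeff N = if h : N < d+1 then x ⟨N, h⟩ else 0 := by
  unfold covPoly
  rw [Polynomial.finset_sum_coeff]
  split
  · next h =>
    rw [Finset.sum_eq_single (⟨N, h⟩ : Fin (d+1))]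
    · simp [Polynomial.coeff_monomial]
    · intro j _ hj
      rw [Polynomial.coeff_monomial, if_neg]
      intro hc
      exact hj (Fin.ext hc)
    · intro hc
      exact absurd (Finset.mem_univ _) hc
  · next h =>
    apply Finset.sum_eq_zero
    intro j _
    rw [Polynomial.coeff_monomial, if_neg]
    intro hc
    omega

lemma covPoly_natDegree (d : ℕ) (x : EuclideanSpace ℝ (Fin (d+1))) :
    (covPoly d x).natDegree ≤ d := by
  rw [Polynomial.natDegree_le_iff_coeff_eq_zero]
  intro N hN
  rw [covPoly_coeff, dif_neg (by omega)]

lemma covPoly_ne (d : ℕ) (x : EuclideanSpace ℝ (Fin (d+1))) (hx : x ∈ sphereSet d) :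
    covPoly d x ≠ 0 := by
  intro h0
  have hx0 : x = 0 := by
    ext j
    have := covPoly_coeff d x (j : ℕ)
    rw [h0, Polynomial.coeff_zero] at this
    have h2 : (0:ℝ) = x ⟨(j:ℕ), j.isLt⟩ := by
      rw [this, dif_pos j.isLt]
    simpa using h2.symm
  rw [sphereSet, mem_sphere_zero_iff_norm] at hx
  rw [hx0] at hx
  simp at hx

lemma covPoly_eval (d : ℕ) (x : EuclideanSpace ℝ (Fin (d+1))) (c : ℝ) :
    (covPoly d x).eval c = ∑ j : Fin (d+1), x j * c^(j:ℕ) := by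
  unfold covPoly
  rw [Polynomial.eval_finset_sum]
  congr 1
  funext j
  rw [Polynomial.eval_monomial]

lemma covPoly_neg (d : ℕ) (x : EuclideanSpace ℝ (Fin (d+1))) :
    covPoly d (-x) = -covPoly d x := by
  unfold covPoly
  rw [← Finset.sum_neg_distrib]
  congr 1
  funext j
  have : (-x) j = -(x j) := rfl
  rw [this, Polynomial.monomial_neg]

def covF (d k : ℕ) : Fin k → Set (EuclideanSpace ℝ (Fin (d+1))) := fun i =>
  {y | y ∈ sphereSet d ∧ 0 < covEps k (i:ℕ) * (covPoly d y).eval ((i:ℕ):ℝ)}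

lemma covCount_eq (d k : ℕ) (x : EuclideanSpace ℝ (Fin (d+1))) (hx : x ∈ sphereSet d) :
    covCount (covF d k) x
      = ((Finset.range k).filter (fun i => 0 < covEps k i * (covPoly d x).eval (i:ℝ))).card := by
  rw [covCount, Nat.card_eq_fintype_card, Fintype.card_subtype]
  have himg : ((Finset.range k).filter (fun i => 0 < covEps k i * (covPoly d x).eval (i:ℝ)))
      = Finset.image Fin.val ((Finset.univ : Finset (Fin k)).filter (fun i => x ∈ covF d k i)) := by
    apply Finset.ext
    intro j
    simp only [Finset.mem_filter, Finset.mem_range, Finset.mem_image, Finset.mem_univ, true_and]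
    constructor
    · rintro ⟨hj, hQ⟩
      exact ⟨⟨j, hj⟩, ⟨hx, hQ⟩, rfl⟩
    · rintro ⟨i, hiF, rfl⟩
      exact ⟨i.isLt, hiF.2⟩
  rw [himg, Finset.card_image_of_injective _ Fin.val_injective]

end AuxCover

open Polynomial Filter
open scoped Classical

/-- Upper bound of Theorem 3: `f̄(d,n,m) ≤ d + 2m − 1`. There exists an antipodal
`(n,m)`-closed-hemisphere-fold cover of `S^d` with `d + 2m - 1` open sets. -/
theorem fbar_upper_bound (d n m : ℕ) (hd : 1 ≤ d) (hn : 1 ≤ n) (hnm : n < m) :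
    ∃ F : Fin (d + 2 * m - 1) → Set (EuclideanSpace ℝ (Fin (d + 1))),
      IsNMBarFoldCover n m F ∧ IsAntipodalFamily F := by
  set k := d + 2 * m - 1 with hk
  have hk1 : 1 ≤ k := by omega
  refine ⟨covF d k, ⟨⟨?_, ?_, ?_⟩, ?_⟩, ?_⟩
  · intro i y hy; exact hy.1
  · intro i
    refine ⟨{y | 0 < covEps k (i:ℕ) * ∑ j : Fin (d+1), y j * (((i:ℕ):ℝ))^(j:ℕ)}, ?_, ?_⟩
    · apply isOpen_lt continuous_const
      apply Continuous.mul continuous_const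
      apply continuous_finset_sum
      intro j _
      exact (EuclideanSpace.proj j : EuclideanSpace ℝ (Fin (d+1)) →L[ℝ] ℝ).continuous.mul continuous_const
    · apply Set.ext
      intro y
      simp only [Set.mem_inter_iff, Set.mem_setOf_eq, covF]
      rw [covPoly_eval]
      tauto
  · intro x hx
    rw [covCount_eq d k x hx]
    have h := count_ge d k hk1 (covPoly d x) (covPoly_ne d x hx) (covPoly_natDegree d x)
      (covEps k) (covEps_pm k) (covEps_alt k)
    omega
  · intro x hx
    obtain ⟨hxs, hxn⟩ := hx
    rw [covCount_eq d k x hxs]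
    rcases hxn.eq_or_lt with heq | hlt
    · have hdeg : (covPoly d x).natDegree ≤ d - 1 := by
        rw [Polynomial.natDegree_le_iff_coeff_eq_zero]
        intro N hN
        rw [covPoly_coeff]
        split
        · next h =>
          have hfl : (⟨N, h⟩ : Fin (d+1)) = Fin.last d := Fin.ext (by simp [Fin.last]; omega)
          rw [hfl, ← heq]
        · rfl
      have h := count_ge (d-1) k hk1 (covPoly d x) (covPoly_ne d x hxs) hdeg
        (covEps k) (covEps_pm k) (covEps_alt k)
      omega
    · have hcd : (covPoly d x).coeff d = x (Fin.last d) := by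
        rw [covPoly_coeff, dif_pos (by omega : d < d+1)]
        exact congrArg x (Fin.ext (by simp [Fin.last]))
      have hne : (covPoly d x).coeff d ≠ 0 := by rw [hcd]; exact ne_of_gt hlt
      have hdeq : (covPoly d x).natDegree = d :=
        le_antisymm (covPoly_natDegree d x) (Polynomial.le_natDegree_of_ne_zero hne)
      have hlead : 0 < (covPoly d x).leadingCoeff := by
        rw [Polynomial.leadingCoeff, hdeq, hcd]; exact hlt
      have hdegpos : 0 < (covPoly d x).degree := by
        rw [Polynomial.degree_eq_natDegree (covPoly_ne d x hxs), hdeq]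
        exact_mod_cast hd
      have htend := Polynomial.tendsto_atTop_of_leadingCoeff_nonneg (covPoly d x) hdegpos hlead.le
      have hev : ∀ᶠ y in Filter.atTop, 0 < (covPoly d x).eval y := htend.eventually_gt_atTop 0
      have hgt : ∀ᶠ y : ℝ in Filter.atTop, (k:ℝ) ≤ y := eventually_ge_atTop _
      obtain ⟨T, hT1, hT2⟩ := (hev.and hgt).exists
      have h := count_ge_north d k (covPoly d x) (covPoly_ne d x hxs) (covPoly_natDegree d x)
        (covEps k) (covEps_pm k) (covEps_alt k) (covEps_k k) T hT2 hT1
      omega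
  · intro i x hxF hxnF
    obtain ⟨-, h1⟩ := hxF
    obtain ⟨-, h2⟩ := hxnF
    rw [covPoly_neg, Polynomial.eval_neg, mul_neg] at h2
    linarith
end
end

section
/- Let d ≥ 2. There exists an antipodal (1, ⌊d/2⌋ + 1)-fold cover of S^d consisting of d + 2 open sets. Consequently, for every m with 1 < m ≤ ⌊d/2⌋ + 1 there is an antipodal (1,m)-fold cover of S^d with d + 2 open sets. (Upper bound in Theorem 4 for m ≤ ⌊d/2⌋ + 1.) -/
noncomputable section

open scoped RealInnerProductSpace

/-! ### Auxiliary construction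

We construct an explicit antipodal `(1, ⌊d/2⌋+1)`-fold cover of `S^d` by `d+2` open sets.

Write a point `x ∈ S^d` as `(y, t)` with `y ∈ ℝ^d` (the first `d` coordinates) and
`t = x_{d+1}` the "north" coordinate, and let `n = ‖y‖`.

We use the `d+1` linear functionals `w_i(y) = y_i` (`i < d`) and `w_d(y) = -∑ y_j`
(which sum to zero and have spread `≥ n/√d`), their max `Ms`, min `ms`, the
`(⌊d/2⌋+1)`-th smallest value `TVx` and the `(⌊d/2⌋+1)`-th largest value `BVx`.

With `ε = 1/(8√d)`, `B = (8/5)√d` we define the threshold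
`bet_i = B·((TVx - w_i)⁺ + (Ms - εn - TVx)⁺)` and the sets (for `i < d+1`):

`U_i = {t > 0 ∧ w_i < Ms - εn} ∪ {t > bet_i} ∪`
`      {|t| < (4/25)n ∧ w_i < ms + εn ∧ (4/25)n < bet_i(-x)}`

together with the last ("southern") set

`U_{d+1} = {t < -3/20} ∪ {t < -1/20 ∧ TVx < Ms - 2εn} ∪ {|t| < (3/20)n ∧ BVx < ms + 2εn}`.

Each `F_i = U_i ∩ S^d` is open in the sphere and antipodal; every point of the sphere is
covered, and every point with `t > 0` lies in at least `⌊d/2⌋+1` of the sets. -/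

namespace F1MAux

open Finset

variable {d : ℕ}

abbrev E (d : ℕ) := EuclideanSpace ℝ (Fin (d + 1))

/-- Last ("north") coordinate. -/
def tc (x : E d) : ℝ := x (Fin.last d)

/-- Equatorial coordinates. -/
def yc (x : E d) (j : Fin d) : ℝ := x j.castSucc

/-- Norm of the equatorial part. -/
def nn (x : E d) : ℝ := Real.sqrt (∑ j : Fin d, yc x j ^ 2)

/-- The `d+1` linear functionals on the equatorial part, summing to zero. -/
def w (i : Fin (d + 1)) (x : E d) : ℝ :=
  if h : (i : ℕ) < d then yc x ⟨i, h⟩ else -∑ j : Fin d, yc x j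

def Ms (x : E d) : ℝ := Finset.univ.sup' Finset.univ_nonempty fun i => w i x

def ms (x : E d) : ℝ := Finset.univ.inf' Finset.univ_nonempty fun i => w i x

/-- The collection of subsets of indices of size `d/2+1`. -/
def subs (d : ℕ) : Finset (Finset (Fin (d + 1))) :=
  (Finset.univ : Finset (Fin (d + 1))).powersetCard (d / 2 + 1)

lemma subs_nonempty : (subs d).Nonempty := by
  apply Finset.powersetCard_nonempty.mpr
  simp only [Finset.card_univ, Fintype.card_fin]
  omega

lemma mem_subs_card {T : Finset (Fin (d + 1))} (h : T ∈ subs d) : T.card = d / 2 + 1 :=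
  (Finset.mem_powersetCard.mp h).2

lemma mem_subs_ne {T : Finset (Fin (d + 1))} (h : T ∈ subs d) : T.Nonempty := by
  apply Finset.card_pos.mp
  rw [mem_subs_card h]; omega

lemma subs_attach_ne : (subs d).attach.Nonempty :=
  Finset.attach_nonempty_iff.mpr subs_nonempty

/-- `(d/2+1)`-th smallest value of `v`. -/
def tvv (v : Fin (d + 1) → ℝ) : ℝ :=
  (subs d).attach.inf' subs_attach_ne fun T => T.1.sup' (mem_subs_ne T.2) v

/-- `(d/2+1)`-th largest value of `v`. -/
def bvv (v : Fin (d + 1) → ℝ) : ℝ :=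
  (subs d).attach.sup' subs_attach_ne fun T => T.1.inf' (mem_subs_ne T.2) v

lemma sup'_neg {ι : Type*} (T : Finset ι) (h : T.Nonempty) (f : ι → ℝ) :
    (T.sup' h fun i => -f i) = -T.inf' h f := by
  obtain ⟨i, hi, hie⟩ := Finset.exists_mem_eq_inf' h f
  apply le_antisymm
  · apply Finset.sup'_le
    intro j hj
    exact neg_le_neg (Finset.inf'_le _ hj)
  · rw [hie]
    exact Finset.le_sup' (fun i => -f i) hi

lemma inf'_neg {ι : Type*} (T : Finset ι) (h : T.Nonempty) (f : ι → ℝ) :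
    (T.inf' h fun i => -f i) = -T.sup' h f := by
  have := sup'_neg T h (fun i => -f i)
  simp only [neg_neg] at this
  rw [this]
  simp

lemma tvv_neg (v : Fin (d + 1) → ℝ) : tvv (fun i => -v i) = -bvv v := by
  unfold tvv bvv
  have h1 : ((subs d).attach.inf' subs_attach_ne fun T => T.1.sup' (mem_subs_ne T.2) fun i => -v i)
      = (subs d).attach.inf' subs_attach_ne fun T => -(T.1.inf' (mem_subs_ne T.2) v) :=
    Finset.inf'_congr subs_attach_ne rfl (fun T _ => sup'_neg T.1 (mem_subs_ne T.2) v)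
  rw [h1, inf'_neg]

lemma bvv_neg (v : Fin (d + 1) → ℝ) : bvv (fun i => -v i) = -tvv v := by
  have := tvv_neg (d := d) (fun i => -v i)
  simp only [neg_neg] at this
  rw [show v = fun i => v i from rfl] at this ⊢
  -- this : tvv v = - bvv (fun i => - v i)
  linarith [this]

/-- There are at least `d/2+1` indices with value `≤ tvv v`. -/
lemma exists_le_tvv (v : Fin (d + 1) → ℝ) :
    ∃ S : Finset (Fin (d + 1)), (∀ i ∈ S, v i ≤ tvv v) ∧ d / 2 + 1 ≤ S.card := by
  obtain ⟨T, hT, hTe⟩ := Finset.exists_mem_eq_inf' subs_attach_ne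
    (fun T : {T // T ∈ subs d} => T.1.sup' (mem_subs_ne T.2) v)
  refine ⟨T.1, fun i hi => ?_, by rw [mem_subs_card T.2]⟩
  have h1 : v i ≤ T.1.sup' (mem_subs_ne T.2) v := Finset.le_sup' _ hi
  rw [← hTe] at h1
  exact h1

/-- There are at least `d+1-d/2` indices with value `≥ tvv v`. -/
lemma exists_ge_tvv (v : Fin (d + 1) → ℝ) :
    ∃ S : Finset (Fin (d + 1)), (∀ i ∈ S, tvv v ≤ v i) ∧ d + 1 - d / 2 ≤ S.card := by
  classical
  set A := Finset.univ.filter (fun i => tvv v ≤ v i) with hA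
  refine ⟨A, fun i hi => (Finset.mem_filter.mp hi).2, ?_⟩
  by_contra hcon
  push_neg at hcon
  have hcompl : d / 2 + 1 ≤ ((Finset.univ : Finset (Fin (d + 1))) \ A).card := by
    rw [Finset.card_sdiff_of_subset (Finset.subset_univ A), Finset.card_univ, Fintype.card_fin]
    have : d / 2 ≤ d := Nat.div_le_self _ _
    omega
  obtain ⟨T, hTsub, hTcard⟩ := Finset.exists_subset_card_eq hcompl
  have hTmem : T ∈ subs d := Finset.mem_powersetCard.mpr ⟨Finset.subset_univ _, hTcard⟩
  have h1 : tvv v ≤ T.sup' (mem_subs_ne hTmem) v :=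
    Finset.inf'_le _ (Finset.mem_attach _ ⟨T, hTmem⟩)
  obtain ⟨i, hiT, hie⟩ := Finset.exists_mem_eq_sup' (mem_subs_ne hTmem) v
  have h2 : i ∉ A := (Finset.mem_sdiff.mp (hTsub hiT)).2
  rw [hA, Finset.mem_filter] at h2
  push_neg at h2
  have h3 := h2 (Finset.mem_univ i)
  rw [hie] at h1
  linarith

lemma exists_ge_bvv (v : Fin (d + 1) → ℝ) :
    ∃ S : Finset (Fin (d + 1)), (∀ i ∈ S, bvv v ≤ v i) ∧ d / 2 + 1 ≤ S.card := by
  obtain ⟨S, hS, hc⟩ := exists_le_tvv (fun i => -v i)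
  rw [tvv_neg] at hS
  exact ⟨S, fun i hi => by linarith [hS i hi], hc⟩

lemma exists_le_bvv (v : Fin (d + 1) → ℝ) :
    ∃ S : Finset (Fin (d + 1)), (∀ i ∈ S, v i ≤ bvv v) ∧ d + 1 - d / 2 ≤ S.card := by
  obtain ⟨S, hS, hc⟩ := exists_ge_tvv (fun i => -v i)
  rw [tvv_neg] at hS
  exact ⟨S, fun i hi => by linarith [hS i hi], hc⟩

def TVx (x : E d) : ℝ := tvv fun i => w i x

def BVx (x : E d) : ℝ := bvv fun i => w i x

def epsd (d : ℕ) : ℝ := 1 / (8 * Real.sqrt d)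

def Bd (d : ℕ) : ℝ := (8 / 5) * Real.sqrt d

/-- Threshold function. -/
def bet (i : Fin (d + 1)) (x : E d) : ℝ :=
  Bd d * (max 0 (TVx x - w i x) + max 0 (Ms x - epsd d * nn x - TVx x))

/-! #### Basic identities -/

lemma yc_neg (x : E d) (j : Fin d) : yc (-x) j = -yc x j := rfl

lemma tc_neg (x : E d) : tc (-x) = -tc x := rfl

lemma w_neg (i : Fin (d + 1)) (x : E d) : w i (-x) = -w i x := by
  unfold w
  split
  · rfl
  · rw [show (fun j => yc (-x) j) = (fun j => -yc x j) from funext fun j => rfl]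
    rw [Finset.sum_neg_distrib]

lemma nn_neg (x : E d) : nn (-x) = nn x := by
  unfold nn
  congr 1
  apply Finset.sum_congr rfl
  intro j _
  rw [yc_neg]
  ring

lemma nn_nonneg (x : E d) : 0 ≤ nn x := Real.sqrt_nonneg _

lemma nn_sq (x : E d) : nn x ^ 2 = ∑ j : Fin d, yc x j ^ 2 :=
  Real.sq_sqrt (by positivity)

lemma Ms_neg (x : E d) : Ms (-x) = -ms x := by
  unfold Ms ms
  rw [show (fun i => w i (-x)) = (fun i => -w i x) from funext fun i => w_neg i x]
  exact sup'_neg _ _ _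

lemma ms_neg (x : E d) : ms (-x) = -Ms x := by
  unfold Ms ms
  rw [show (fun i => w i (-x)) = (fun i => -w i x) from funext fun i => w_neg i x]
  exact inf'_neg _ _ _

lemma TVx_neg (x : E d) : TVx (-x) = -BVx x := by
  unfold TVx BVx
  rw [show (fun i => w i (-x)) = (fun i => -w i x) from funext fun i => w_neg i x]
  exact tvv_neg _

lemma BVx_neg (x : E d) : BVx (-x) = -TVx x := by
  unfold TVx BVx
  rw [show (fun i => w i (-x)) = (fun i => -w i x) from funext fun i => w_neg i x]
  exact bvv_neg _

lemma w_castSucc (j : Fin d) (x : E d) : w j.castSucc x = yc x j := by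
  have h : ((j.castSucc : Fin (d+1)) : ℕ) < d := by simp
  unfold w
  rw [dif_pos h]
  first
  | rfl
  | (congr 1; exact Fin.ext (by simp))

lemma w_last (x : E d) : w (Fin.last d) x = -∑ j : Fin d, yc x j := by
  unfold w
  rw [dif_neg (by simp)]

lemma sum_w (x : E d) : ∑ i : Fin (d + 1), w i x = 0 := by
  rw [Fin.sum_univ_castSucc]
  rw [w_last]
  rw [Finset.sum_congr rfl fun j _ => w_castSucc j x]
  ring

lemma le_Ms (i : Fin (d + 1)) (x : E d) : w i x ≤ Ms x :=
  Finset.le_sup' (fun i => w i x) (Finset.mem_univ i)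

lemma ms_le (i : Fin (d + 1)) (x : E d) : ms x ≤ w i x :=
  Finset.inf'_le (fun i => w i x) (Finset.mem_univ i)

lemma Ms_nonneg (x : E d) : 0 ≤ Ms x := by
  have h1 : ∑ i : Fin (d + 1), w i x ≤ (Finset.univ : Finset (Fin (d+1))).card • Ms x :=
    Finset.sum_le_card_nsmul _ _ _ fun i _ => le_Ms i x
  rw [sum_w, Finset.card_univ, Fintype.card_fin, nsmul_eq_mul] at h1
  have h2 : (0:ℝ) < (d+1 : ℕ) := by positivity
  nlinarith

lemma ms_nonpos (x : E d) : ms x ≤ 0 := by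
  have h1 : (Finset.univ : Finset (Fin (d+1))).card • ms x ≤ ∑ i : Fin (d + 1), w i x :=
    Finset.card_nsmul_le_sum _ _ _ fun i _ => ms_le i x
  rw [sum_w, Finset.card_univ, Fintype.card_fin, nsmul_eq_mul] at h1
  have h2 : (0:ℝ) < (d+1 : ℕ) := by positivity
  nlinarith

lemma sqrt_d_pos (hd : 0 < d) : (0:ℝ) < Real.sqrt d := by
  apply Real.sqrt_pos.mpr
  exact_mod_cast hd

lemma epsd_pos (hd : 0 < d) : 0 < epsd d := by
  unfold epsd
  have := sqrt_d_pos hd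
  positivity

lemma Bd_nonneg : 0 ≤ Bd d := by
  unfold Bd
  positivity

lemma Bd_mul_epsd (hd : 0 < d) : Bd d * epsd d = 1/5 := by
  unfold Bd epsd
  have h := sqrt_d_pos hd
  field_simp

lemma bet_nonneg (i : Fin (d + 1)) (x : E d) : 0 ≤ bet i x := by
  unfold bet
  have h1 : (0:ℝ) ≤ max 0 (TVx x - w i x) := le_max_left _ _
  have h2 : (0:ℝ) ≤ max 0 (Ms x - epsd d * nn x - TVx x) := le_max_left _ _
  have := Bd_nonneg (d := d)
  nlinarith

/-- The spread of the values `w i x` is at least `8 ε ‖y‖`. -/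
lemma spread (hd : 0 < d) (x : E d) : 8 * epsd d * nn x ≤ Ms x - ms x := by
  have hne : (Finset.univ : Finset (Fin d)).Nonempty := ⟨⟨0, hd⟩, Finset.mem_univ _⟩
  obtain ⟨j, _, hj⟩ := Finset.exists_max_image Finset.univ (fun j => yc x j ^ 2) hne
  have hsum : ∑ k : Fin d, yc x k ^ 2 ≤ (d : ℝ) * yc x j ^ 2 := by
    calc ∑ k : Fin d, yc x k ^ 2
        ≤ (Finset.univ : Finset (Fin d)).card • (yc x j ^ 2) :=
          Finset.sum_le_card_nsmul _ _ _ fun k _ => hj k (Finset.mem_univ k)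
      _ = (d : ℝ) * yc x j ^ 2 := by
          rw [Finset.card_univ, Fintype.card_fin, nsmul_eq_mul]
  have hnn2 : nn x ^ 2 ≤ (d:ℝ) * yc x j ^ 2 := by rw [nn_sq]; exact hsum
  have hs : nn x ≤ Real.sqrt d * |yc x j| := by
    have h1 : nn x = Real.sqrt (nn x ^ 2) := (Real.sqrt_sq (nn_nonneg x)).symm
    rw [h1]
    calc Real.sqrt (nn x ^ 2) ≤ Real.sqrt ((d:ℝ) * yc x j ^ 2) := Real.sqrt_le_sqrt hnn2
      _ = Real.sqrt d * |yc x j| := by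
          rw [Real.sqrt_mul (by positivity), Real.sqrt_sq_eq_abs]
  have hw : w j.castSucc x = yc x j := w_castSucc j x
  have hle : |yc x j| ≤ Ms x - ms x := by
    rcases le_or_gt 0 (yc x j) with h | h
    · have h1 : yc x j ≤ Ms x := hw ▸ le_Ms j.castSucc x
      have h2 := ms_nonpos x
      rw [abs_of_nonneg h]; linarith
    · have h1 : ms x ≤ yc x j := hw ▸ ms_le j.castSucc x
      have h2 := Ms_nonneg x
      rw [abs_of_neg h]; linarith
  have hsd := sqrt_d_pos hd
  have key : 8 * epsd d * nn x ≤ |yc x j| := by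
    unfold epsd
    rw [show 8 * (1 / (8 * Real.sqrt d)) * nn x = nn x / Real.sqrt d by field_simp]
    rw [div_le_iff₀ hsd]
    nlinarith [abs_nonneg (yc x j)]
  linarith

/-! #### Continuity -/

lemma cont_coord (i : Fin (d + 1)) : Continuous fun x : E d => x i :=
  (EuclideanSpace.proj i : E d →L[ℝ] ℝ).continuous

lemma cont_tc : Continuous (tc (d := d)) := cont_coord _

lemma cont_yc (j : Fin d) : Continuous fun x : E d => yc x j := cont_coord _

lemma cont_nn : Continuous (nn (d := d)) := by
  apply Real.continuous_sqrt.comp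
  exact continuous_finset_sum _ fun j _ => (cont_yc j).pow 2

lemma cont_w (i : Fin (d + 1)) : Continuous fun x : E d => w i x := by
  unfold w
  by_cases h : (i : ℕ) < d
  · simp only [dif_pos h]; exact cont_yc _
  · simp only [dif_neg h]
    exact (continuous_finset_sum _ fun j _ => cont_yc j).neg

lemma cont_sup' {α ι : Type*} [TopologicalSpace α] (f : ι → α → ℝ)
    (hf : ∀ i, Continuous (f i)) :
    ∀ (S : Finset ι) (hS : S.Nonempty), Continuous fun x => S.sup' hS fun i => f i x := by
  intro S hS
  induction hS using Finset.Nonempty.cons_induction with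
  | singleton i => simpa using hf i
  | cons a s ha hs ih =>
      simp only [Finset.sup'_cons, hs]
      exact (hf a).max ih

lemma cont_inf' {α ι : Type*} [TopologicalSpace α] (f : ι → α → ℝ)
    (hf : ∀ i, Continuous (f i)) :
    ∀ (S : Finset ι) (hS : S.Nonempty), Continuous fun x => S.inf' hS fun i => f i x := by
  intro S hS
  induction hS using Finset.Nonempty.cons_induction with
  | singleton i => simpa using hf i
  | cons a s ha hs ih =>
      simp only [Finset.inf'_cons, hs]
      exact (hf a).min ih

lemma cont_Ms : Continuous (Ms (d := d)) :=
  cont_sup' _ cont_w _ _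

lemma cont_ms : Continuous (ms (d := d)) :=
  cont_inf' _ cont_w _ _

lemma cont_TVx : Continuous (TVx (d := d)) := by
  unfold TVx tvv
  exact cont_inf' _ (fun T => cont_sup' _ cont_w _ _) _ _

lemma cont_BVx : Continuous (BVx (d := d)) := by
  unfold BVx bvv
  exact cont_sup' _ (fun T => cont_inf' _ cont_w _ _) _ _

lemma cont_bet (i : Fin (d + 1)) : Continuous fun x : E d => bet i x := by
  unfold bet
  apply Continuous.mul continuous_const
  apply Continuous.add
  · exact continuous_const.max (cont_TVx.sub (cont_w i))
  · exact continuous_const.max ((cont_Ms.sub (continuous_const.mul cont_nn)).sub cont_TVx)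

/-! #### The sets of the cover -/

def Dc : ℝ := 4 / 25

def UP (i : Fin (d + 1)) : Set (E d) :=
  {x | 0 < tc x ∧ w i x < Ms x - epsd d * nn x} ∪
  {x | bet i x < tc x} ∪
  {x | |tc x| < Dc * nn x ∧ w i x < ms x + epsd d * nn x ∧ Dc * nn x < bet i (-x)}

def UC : Set (E d) :=
  {x | tc x < -(3 / 20)} ∪
  {x | tc x < -(1 / 20) ∧ TVx x < Ms x - 2 * epsd d * nn x} ∪
  {x | |tc x| < (3 / 20) * nn x ∧ BVx x < ms x + 2 * epsd d * nn x}

def U (d : ℕ) : Fin (d + 2) → Set (E d) := fun i =>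
  if h : (i : ℕ) < d + 1 then UP ⟨(i : ℕ), h⟩ else UC

/-- The cover. -/
def Fam (d : ℕ) : Fin (d + 2) → Set (E d) := fun i => U d i ∩ sphereSet d

lemma isOpen_UP (i : Fin (d + 1)) : IsOpen (UP i) := by
  unfold UP
  apply IsOpen.union
  apply IsOpen.union
  · exact (isOpen_lt continuous_const cont_tc).inter
      (isOpen_lt (cont_w i) (cont_Ms.sub (continuous_const.mul cont_nn)))
  · exact isOpen_lt (cont_bet i) cont_tc
  · refine (isOpen_lt (continuous_abs.comp cont_tc) (continuous_const.mul cont_nn)).inter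
      (IsOpen.inter ?_ ?_)
    · exact isOpen_lt (cont_w i) (cont_ms.add (continuous_const.mul cont_nn))
    · exact isOpen_lt (continuous_const.mul cont_nn) ((cont_bet i).comp continuous_neg)

lemma isOpen_UC : IsOpen (UC (d := d)) := by
  unfold UC
  apply IsOpen.union
  apply IsOpen.union
  · exact isOpen_lt cont_tc continuous_const
  · exact (isOpen_lt cont_tc continuous_const).inter
      (isOpen_lt cont_TVx (cont_Ms.sub (continuous_const.mul cont_nn)))
  · exact (isOpen_lt (continuous_abs.comp cont_tc) (continuous_const.mul cont_nn)).inter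
      (isOpen_lt cont_BVx (cont_ms.add (continuous_const.mul cont_nn)))

lemma isOpen_U (i : Fin (d + 2)) : IsOpen (U d i) := by
  unfold U
  by_cases h : (i : ℕ) < d + 1
  · simp only [dif_pos h]; exact isOpen_UP _
  · simp only [dif_neg h]; exact isOpen_UC

lemma U_castSucc (i : Fin (d + 1)) : U d i.castSucc = UP i := by
  unfold U
  rw [dif_pos (by simp [Fin.is_lt]; exact Fin.is_le i : ((i.castSucc : Fin (d + 2)) : ℕ) < d + 1)]
  first
  | rfl
  | (congr 1; exact Fin.ext (by simp))

lemma U_last : U d (Fin.last (d + 1)) = UC := by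
  unfold U
  rw [dif_neg (by simp)]

/-! #### Sphere facts -/

lemma sphere_norm {x : E d} (hx : x ∈ sphereSet d) : nn x ^ 2 + tc x ^ 2 = 1 := by
  have h1 : ‖x‖ = 1 := by
    have := hx
    simp only [sphereSet, Metric.mem_sphere, dist_zero_right] at this
    exact this
  have h2 : ∑ i : Fin (d + 1), x i ^ 2 = 1 := by
    have := EuclideanSpace.norm_eq x
    rw [h1] at this
    have h3 : Real.sqrt (∑ i, ‖x i‖ ^ 2) = 1 := this.symm
    have h4 := Real.sqrt_eq_one.mp h3
    simpa [Real.norm_eq_abs, sq_abs] using h4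
  rw [nn_sq]
  rw [Fin.sum_univ_castSucc] at h2
  exact h2

lemma nn_le_one {x : E d} (hx : x ∈ sphereSet d) : nn x ≤ 1 := by
  have h := sphere_norm hx
  nlinarith [nn_nonneg x, sq_nonneg (tc x)]

/-! #### Covering count -/

lemma le_covCount {k : ℕ} (F : Fin k → Set (E d)) (x : E d) (S : Finset (Fin k))
    (h : ∀ i ∈ S, x ∈ F i) : S.card ≤ covCount F x := by
  classical
  have h1 : S.card = Nat.card {i : Fin k // i ∈ S} := by
    simp [Nat.card_eq_fintype_card, Fintype.card_coe]
  rw [covCount, h1]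
  have hinj : Function.Injective
      (fun j : {i : Fin k // i ∈ S} => (⟨j.1, h j.1 j.2⟩ : {i : Fin k // x ∈ F i})) := by
    intro a b hab
    have h2 : (a : Fin k) = (b : Fin k) := by
      have h3 := congrArg (Subtype.val (p := fun i : Fin k => x ∈ F i)) hab
      simpa using h3
    exact Subtype.ext h2
  exact Nat.card_le_card_of_injective _ hinj

/-! #### Key inequalities -/

lemma TV_lt_of (hd : 0 < d) (x : E d) (hn : 0 < nn x)
    (ha : BVx x < ms x + 2 * epsd d * nn x) : TVx x < Ms x - 2 * epsd d * nn x := by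
  by_contra hcon
  push_neg at hcon
  obtain ⟨S1, hS1mem, hS1card⟩ := exists_ge_tvv (fun i => w i x)
  obtain ⟨S2, hS2mem, hS2card⟩ := exists_le_bvv (fun i => w i x)
  have hcap : (S1 ∩ S2).Nonempty := by
    have h1 := Finset.card_inter_add_card_union S1 S2
    have h2 : (S1 ∪ S2).card ≤ d + 1 := by
      have := Finset.card_le_card (Finset.subset_univ (S1 ∪ S2))
      simpa [Finset.card_univ] using this
    apply Finset.card_pos.mp
    omega
  obtain ⟨i, hi⟩ := hcap
  have h1 : TVx x ≤ w i x := hS1mem i (Finset.mem_of_mem_inter_left hi)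
  have h2 : w i x ≤ BVx x := hS2mem i (Finset.mem_of_mem_inter_right hi)
  have hsp := spread hd x
  have he : 0 < epsd d * nn x := mul_pos (epsd_pos hd) hn
  linarith

lemma bet_neg (i : Fin (d + 1)) (x : E d) :
    bet i (-x) = Bd d * (max 0 (w i x - BVx x) + max 0 (BVx x - ms x - epsd d * nn x)) := by
  unfold bet
  rw [TVx_neg, Ms_neg, nn_neg, w_neg,
    show -BVx x - -w i x = w i x - BVx x from by ring,
    show -ms x - epsd d * nn x - -BVx x = BVx x - ms x - epsd d * nn x from by ring]

/-! #### The northern multiplicity -/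

lemma north_count (x : E d) (hx : x ∈ sphereSet d) (ht : 0 < tc x) :
    d / 2 + 1 ≤ covCount (Fam d) x := by
  classical
  have hembdef : ∀ i : Fin (d + 1),
      (⟨Fin.castSucc, Fin.castSucc_injective _⟩ : Fin (d+1) ↪ Fin (d+2)) i = i.castSucc :=
    fun i => rfl
  by_cases hc : TVx x < Ms x - epsd d * nn x
  · obtain ⟨S0, hS0mem, hS0card⟩ := exists_le_tvv (fun i => w i x)
    refine le_trans ?_ (le_covCount (Fam d) x
      (S0.map ⟨Fin.castSucc, Fin.castSucc_injective _⟩) ?_)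
    · rw [Finset.card_map]; exact hS0card
    · intro j hj
      obtain ⟨i, hiS0, rfl⟩ := Finset.mem_map.mp hj
      refine ⟨?_, hx⟩
      rw [hembdef, U_castSucc]
      have h1 : w i x ≤ TVx x := hS0mem i hiS0
      exact Or.inl (Or.inl ⟨ht, by linarith⟩)
  · push_neg at hc
    obtain ⟨S0, hS0mem, hS0card⟩ := exists_ge_tvv (fun i => w i x)
    refine le_trans ?_ (le_covCount (Fam d) x
      (S0.map ⟨Fin.castSucc, Fin.castSucc_injective _⟩) ?_)
    · rw [Finset.card_map]; omega
    · intro j hj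
      obtain ⟨i, hiS0, rfl⟩ := Finset.mem_map.mp hj
      refine ⟨?_, hx⟩
      rw [hembdef, U_castSucc]
      refine Or.inl (Or.inr ?_)
      have h1 : TVx x ≤ w i x := hS0mem i hiS0
      have hb : bet i x = 0 := by
        unfold bet
        rw [max_eq_left (by linarith : TVx x - w i x ≤ 0),
          max_eq_left (by linarith : Ms x - epsd d * nn x - TVx x ≤ 0)]
        ring
      show bet i x < tc x
      rw [hb]; exact ht

/-! #### Covering every point -/

lemma cover_one (hd : 0 < d) (x : E d) (hx : x ∈ sphereSet d) : 1 ≤ covCount (Fam d) x := by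
  classical
  have single : ∀ j : Fin (d + 2), x ∈ Fam d j → 1 ≤ covCount (Fam d) x := by
    intro j hj
    have h := le_covCount (Fam d) x {j}
      (by intro i hi; rw [Finset.mem_singleton] at hi; rwa [hi])
    simpa using h
  rcases lt_or_ge 0 (tc x) with ht | ht
  · exact le_trans (by omega) (north_count x hx ht)
  have hsph := sphere_norm hx
  have hnn0 := nn_nonneg x
  have heps := epsd_pos hd
  rcases eq_or_lt_of_le hnn0 with hnz | hnz
  · have h1 : tc x ^ 2 = 1 := by nlinarith [hsph]
    have h2 : (tc x - 1) * (tc x + 1) = 0 := by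
      have h3 : (tc x - 1) * (tc x + 1) = tc x ^ 2 - 1 := by ring
      rw [h3, h1]; ring
    rcases mul_eq_zero.mp h2 with h3 | h3
    · exfalso; linarith
    · apply single (Fin.last (d + 1))
      refine ⟨?_, hx⟩
      rw [U_last]
      refine Or.inl (Or.inl ?_)
      show tc x < -(3/20)
      have h4 : tc x = -1 := by linarith
      rw [h4]; norm_num
  · by_cases halpha : BVx x < ms x + 2 * epsd d * nn x
    · apply single (Fin.last (d + 1))
      refine ⟨?_, hx⟩
      rw [U_last]
      by_cases ht1 : tc x < -(1/20)
      · exact Or.inl (Or.inr ⟨ht1, TV_lt_of hd x hnz halpha⟩)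
      · push_neg at ht1
        refine Or.inr ⟨?_, halpha⟩
        have habs : |tc x| ≤ 1/20 := abs_le.mpr ⟨by linarith, by linarith⟩
        have h9 : (1:ℝ)/20 < (3/20) * nn x := by
          nlinarith [hsph, sq_abs (tc x), abs_nonneg (tc x)]
        show |tc x| < (3/20) * nn x
        linarith
    · push_neg at halpha
      obtain ⟨istar, _, hmi⟩ := Finset.exists_mem_eq_inf'
        (Finset.univ_nonempty : (Finset.univ : Finset (Fin (d+1))).Nonempty) (fun i => w i x)
      have hms : ms x = w istar x := hmi
      by_cases ht1 : tc x < -(3/20)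
      · apply single (Fin.last (d + 1))
        exact ⟨by rw [U_last]; exact Or.inl (Or.inl ht1), hx⟩
      · push_neg at ht1
        apply single istar.castSucc
        refine ⟨?_, hx⟩
        rw [U_castSucc]
        refine Or.inr ⟨?_, ?_, ?_⟩
        · show |tc x| < Dc * nn x
          have habs : |tc x| ≤ 3/20 := abs_le.mpr ⟨ht1, by linarith⟩
          have hD : Dc = 4/25 := rfl
          have h9 : (3:ℝ)/20 < Dc * nn x := by
            rw [hD]
            nlinarith [hsph, sq_abs (tc x), abs_nonneg (tc x)]
          linarith
        · show w istar x < ms x + epsd d * nn x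
          rw [← hms]
          nlinarith [mul_pos heps hnz]
        · show Dc * nn x < bet istar (-x)
          rw [bet_neg]
          have hBd := Bd_nonneg (d := d)
          have hBeps := Bd_mul_epsd hd
          have he : 0 < epsd d * nn x := mul_pos heps hnz
          have h1 : max 0 (w istar x - BVx x) = 0 := by
            apply max_eq_left
            rw [← hms]
            linarith
          have h2 : epsd d * nn x ≤ max 0 (BVx x - ms x - epsd d * nn x) :=
            le_trans (by linarith) (le_max_right _ _)
          have h3 : Bd d * (epsd d * nn x) ≤
              Bd d * (max 0 (w istar x - BVx x) + max 0 (BVx x - ms x - epsd d * nn x)) := by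
            rw [h1]
            apply mul_le_mul_of_nonneg_left _ hBd
            linarith
          have h4 : Bd d * (epsd d * nn x) = (1/5) * nn x := by
            rw [← mul_assoc, hBeps]
          have hD : Dc = 4/25 := rfl
          rw [hD]
          nlinarith

/-! #### Antipodality -/

lemma antipodal_Fam (hd : 0 < d) : IsAntipodalFamily (Fam d) := by
  intro i x hx hnx
  obtain ⟨hxU, hxS⟩ := hx
  obtain ⟨hnxU, hnxS⟩ := hnx
  have hD : Dc = (4:ℝ)/25 := rfl
  by_cases h : (i : ℕ) < d + 1
  · set j : Fin (d + 1) := ⟨(i : ℕ), h⟩ with hjdef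
    rw [show U d i = UP j from by unfold U; rw [dif_pos h]] at hxU hnxU
    unfold UP at hxU hnxU
    have hbet0x := bet_nonneg j x
    have hbet0n := bet_nonneg j (-x)
    rcases hxU with ((⟨ht, hw⟩ | h2) | ⟨hb1, hb2, hb3⟩) <;>
      rcases hnxU with ((⟨ht', hw'⟩ | h2') | ⟨hb1', hb2', hb3'⟩) <;>
      simp only [Set.mem_setOf_eq, tc_neg, w_neg, nn_neg, Ms_neg, ms_neg, TVx_neg, BVx_neg,
        abs_neg, neg_neg] at *
    · linarith
    · linarith
    · linarith
    · linarith
    · linarith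
    · linarith [le_abs_self (tc x)]
    · linarith
    · linarith [neg_le_abs (tc x)]
    · have hnpos : 0 < nn x := by nlinarith [abs_nonneg (tc x)]
      have hsp := spread hd x
      have he : 0 < epsd d * nn x := mul_pos (epsd_pos hd) hnpos
      linarith
  · rw [show U d i = UC from by unfold U; rw [dif_neg h]] at hxU hnxU
    unfold UC at hxU hnxU
    have hone := nn_le_one hxS
    rcases hxU with ((h1 | ⟨h2a, h2b⟩) | ⟨h3a, h3b⟩) <;>
      rcases hnxU with ((h1' | ⟨h2a', h2b'⟩) | ⟨h3a', h3b'⟩) <;>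
      simp only [Set.mem_setOf_eq, tc_neg, w_neg, nn_neg, Ms_neg, ms_neg, TVx_neg, BVx_neg,
        abs_neg, neg_neg] at *
    · linarith
    · linarith
    · linarith [neg_le_abs (tc x)]
    · linarith
    · linarith
    · linarith
    · linarith [le_abs_self (tc x)]
    · linarith
    · have hnpos : 0 < nn x := by nlinarith [abs_nonneg (tc x)]
      have := TV_lt_of hd x hnpos h3b
      linarith
end F1MAux

/-- Upper bound in Theorem 4 for `m ≤ ⌊d/2⌋ + 1`: there exists an antipodal
`(1, ⌊d/2⌋ + 1)`-fold cover of `S^d` with `d + 2` open sets; consequently for every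
`m` with `1 < m ≤ ⌊d/2⌋ + 1` there is an antipodal `(1,m)`-fold cover with `d + 2`
open sets. -/
theorem f1m_upper_bound_small_m (d : ℕ) (hd : 2 ≤ d) :
    (∃ F : Fin (d + 2) → Set (EuclideanSpace ℝ (Fin (d + 1))),
        IsNMFoldCover 1 (d / 2 + 1) F ∧ IsAntipodalFamily F) ∧
      ∀ m : ℕ, 1 < m → m ≤ d / 2 + 1 →
        ∃ F : Fin (d + 2) → Set (EuclideanSpace ℝ (Fin (d + 1))),
          IsNMFoldCover 1 m F ∧ IsAntipodalFamily F := by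
  have hd0 : 0 < d := by omega
  have hmain : IsNMFoldCover 1 (d / 2 + 1) (F1MAux.Fam d) ∧ IsAntipodalFamily (F1MAux.Fam d) := by
    refine ⟨⟨⟨fun i => Set.inter_subset_right,
      fun i => ⟨F1MAux.U d i, F1MAux.isOpen_U i, rfl⟩, ?_⟩, ?_⟩, F1MAux.antipodal_Fam hd0⟩
    · exact fun x hx => F1MAux.cover_one hd0 x hx
    · intro x hx
      exact F1MAux.north_count x hx.1 hx.2
  constructor
  · exact ⟨F1MAux.Fam d, hmain⟩
  · intro m _ hm2
    refine ⟨F1MAux.Fam d, ⟨hmain.1.1, ?_⟩, hmain.2⟩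
    intro x hx
    exact le_trans hm2 (hmain.1.2 x hx)
end
end

section
/- Let m > 1. Every antipodal (1,m)-fold cover of the circle S^1 by k open sets satisfies k ≥ m + 2. (Lower bound of Proposition 5: f(1,1,m) ≥ 2 + m.) -/
noncomputable section

open scoped RealInnerProductSpace

/-! ### Auxiliary material for the proof -/

namespace CircleCoverAux

open Real

/-- The point `(a, b)` of the plane `ℝ² = EuclideanSpace ℝ (Fin (1+1))`. -/
def pt (a b : ℝ) : EuclideanSpace ℝ (Fin (1 + 1)) := WithLp.toLp 2 ![a, b]

lemma pt_eta (x : EuclideanSpace ℝ (Fin (1 + 1))) : x = pt (x 0) (x (Fin.last 1)) := by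
  ext i; fin_cases i <;> rfl

lemma pt_mem (a b : ℝ) (h : a ^ 2 + b ^ 2 = 1) : pt a b ∈ sphereSet 1 := by
  rw [sphereSet, mem_sphere_zero_iff_norm, EuclideanSpace.norm_eq, ← Real.sqrt_one]
  congr 1
  rw [Fin.sum_univ_two]
  simpa [pt, sq_abs] using h

lemma coord_sq (x : EuclideanSpace ℝ (Fin (1 + 1))) (h : x ∈ sphereSet 1) :
    (x 0) ^ 2 + (x (Fin.last 1)) ^ 2 = 1 := by
  rw [sphereSet, mem_sphere_zero_iff_norm] at h
  have := congrArg (· ^ 2) h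
  rw [EuclideanSpace.norm_eq] at this
  simp [Fin.sum_univ_two, sq_abs] at this
  have hl : (Fin.last 1 : Fin 2) = 1 := rfl
  rcases this with h1 | h1
  · rw [hl]; exact h1
  · linarith [Real.sqrt_nonneg (x 0 ^ 2 + x 1 ^ 2)]

lemma dist_pt (a b c d : ℝ) : dist (pt a b) (pt c d) = Real.sqrt ((a - c) ^ 2 + (b - d) ^ 2) := by
  rw [EuclideanSpace.dist_eq, Fin.sum_univ_two]
  simp [pt, Real.dist_eq, sq_abs]

lemma dist_pt' (a b : ℝ) (x : EuclideanSpace ℝ (Fin (1 + 1))) :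
    dist (pt a b) x = Real.sqrt ((a - x 0) ^ 2 + (b - x (Fin.last 1)) ^ 2) := by
  conv_lhs => rw [pt_eta x]
  exact dist_pt a b (x 0) (x (Fin.last 1))

lemma neg_sphere {x : EuclideanSpace ℝ (Fin (1 + 1))} (h : x ∈ sphereSet 1) :
    -x ∈ sphereSet 1 := by
  rw [sphereSet, mem_sphere_zero_iff_norm] at h ⊢
  rwa [norm_neg]

open Classical in
lemma covCount_eq {d k : ℕ} (F : Fin k → Set (EuclideanSpace ℝ (Fin (d + 1))))
    (x : EuclideanSpace ℝ (Fin (d + 1))) :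
    covCount F x = (Finset.univ.filter (fun i => x ∈ F i)).card := by
  rw [covCount, Nat.card_eq_fintype_card, Fintype.card_subtype]

open Classical in
lemma covCount_add_le {d k : ℕ} (F : Fin k → Set (EuclideanSpace ℝ (Fin (d + 1))))
    (hanti : ∀ i : Fin k, ∀ x ∈ F i, -x ∉ F i)
    (x : EuclideanSpace ℝ (Fin (d + 1))) :
    covCount F x + covCount F (-x) ≤ k := by
  rw [covCount_eq, covCount_eq, ← Finset.card_union_of_disjoint]
  · calc _ ≤ Finset.univ.card := Finset.card_le_univ _
      _ = k := Finset.card_univ.trans (Fintype.card_fin k)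
  · rw [Finset.disjoint_filter]
    intro i _ hx hnx
    exact hanti i x hx hnx

open Classical in
lemma exists_mem_of_one_le {d k : ℕ} (F : Fin k → Set (EuclideanSpace ℝ (Fin (d + 1))))
    (x : EuclideanSpace ℝ (Fin (d + 1))) (h : 1 ≤ covCount F x) : ∃ i, x ∈ F i := by
  rw [covCount_eq] at h
  obtain ⟨i, hi⟩ := Finset.card_pos.1 h
  exact ⟨i, (Finset.mem_filter.1 hi).2⟩

open Classical in
lemma two_le_covCount {d k : ℕ} (F : Fin k → Set (EuclideanSpace ℝ (Fin (d + 1))))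
    (x : EuclideanSpace ℝ (Fin (d + 1))) {i j : Fin k} (hi : x ∈ F i) (hj : x ∈ F j)
    (hij : i ≠ j) : 2 ≤ covCount F x := by
  rw [covCount_eq]
  have hsub : ({i, j} : Finset (Fin k)) ⊆ Finset.univ.filter (fun l => x ∈ F l) := by
    intro l hl
    simp only [Finset.mem_insert, Finset.mem_singleton] at hl
    rcases hl with rfl | rfl <;> simp [hi, hj]
  have h2 : ({i, j} : Finset (Fin k)).card = 2 := by
    rw [Finset.card_insert_of_notMem (by simpa using hij), Finset.card_singleton]
  calc 2 = ({i, j} : Finset (Fin k)).card := h2.symm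
    _ ≤ _ := Finset.card_le_card hsub

open Classical in
lemma all_but_one {d k : ℕ} (F : Fin k → Set (EuclideanSpace ℝ (Fin (d + 1))))
    (x : EuclideanSpace ℝ (Fin (d + 1))) (i0 : Fin k) (h0 : x ∉ F i0)
    (hge : k - 1 ≤ covCount F x) : ∀ i, i ≠ i0 → x ∈ F i := by
  intro i hi
  by_contra hxi
  have hsub : (Finset.univ.filter (fun j => x ∈ F j)) ⊆ Finset.univ \ {i0, i} := by
    intro j hj
    simp only [Finset.mem_filter] at hj
    simp only [Finset.mem_sdiff, Finset.mem_insert, Finset.mem_singleton]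
    refine ⟨Finset.mem_univ _, ?_⟩
    rintro (rfl | rfl)
    · exact h0 hj.2
    · exact hxi hj.2
  have hcard := Finset.card_le_card hsub
  rw [Finset.card_sdiff_of_subset (by simp)] at hcard
  have h2 : ({i0, i} : Finset (Fin k)).card = 2 := by
    rw [Finset.card_insert_of_notMem (by simpa using hi.symm), Finset.card_singleton]
  rw [covCount_eq] at hge
  have hk1 : 1 ≤ k := Nat.pos_of_ne_zero (by rintro rfl; exact i0.elim0)
  simp [h2] at hcard
  omega

/-- A preconnected set covered by pairwise-disjoint-on-it open sets lies in one of them. -/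
lemma preconn_subset {α : Type*} [TopologicalSpace α] {s : Set α} (hs : IsPreconnected s)
    {k : ℕ} (V : Fin k → Set α) (hV : ∀ i, IsOpen (V i))
    (hcov : ∀ x ∈ s, ∃ i, x ∈ V i)
    (hdisj : ∀ x ∈ s, ∀ i j, x ∈ V i → x ∈ V j → i = j)
    {x0 : α} (hx0 : x0 ∈ s) {i0 : Fin k} (hi0 : x0 ∈ V i0) : s ⊆ V i0 := by
  by_contra hsub
  obtain ⟨y, hy, hyn⟩ := Set.not_subset.1 hsub
  obtain ⟨j, hj⟩ := hcov y hy
  have hji : j ≠ i0 := fun h => hyn (h ▸ hj)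
  have hcover : s ⊆ V i0 ∪ ⋃ j' ∈ ({i0}ᶜ : Set (Fin k)), V j' := by
    intro z hz
    obtain ⟨i, hi⟩ := hcov z hz
    by_cases h : i = i0
    · exact Or.inl (h ▸ hi)
    · exact Or.inr (Set.mem_biUnion h hi)
  have := hs (V i0) (⋃ j' ∈ ({i0}ᶜ : Set (Fin k)), V j') (hV i0)
    (isOpen_biUnion fun _ _ => hV _) hcover ⟨x0, hx0, hi0⟩ ⟨y, hy, Set.mem_biUnion hji hj⟩
  obtain ⟨z, hz, hz0, hzU⟩ := this
  obtain ⟨j', hj'mem, hzj'⟩ := Set.mem_iUnion₂.1 hzU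
  exact hj'mem (Set.mem_singleton_iff.2 (hdisj z hz j' i0 hzj' hz0))

lemma cont_param : Continuous (fun θ : ℝ => pt (cos θ) (sin θ)) := by
  apply Continuous.comp (PiLp.continuous_toLp 2 (fun _ : Fin 2 => ℝ))
  refine continuous_pi (fun i => ?_)
  fin_cases i
  · exact Real.continuous_cos
  · exact Real.continuous_sin

lemma upper_eq : openNorth 1 = (fun θ : ℝ => pt (cos θ) (sin θ)) '' Set.Ioo 0 π := by
  ext x
  constructor
  · rintro ⟨hxs, hx1⟩
    have hsq := coord_sq x hxs
    have hx1pos : (0 : ℝ) < x (Fin.last 1) := hx1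
    have hx0lt : |x 0| < 1 := by
      nlinarith [abs_nonneg (x 0), sq_abs (x 0)]
    obtain ⟨hl, hr⟩ := abs_lt.1 hx0lt
    have hπlt : Real.arccos (x 0) < π :=
      lt_of_le_of_ne (Real.arccos_le_pi _) fun h => by
        rw [Real.arccos_eq_pi] at h; linarith
    refine ⟨Real.arccos (x 0), ⟨Real.arccos_pos.2 hr, hπlt⟩, ?_⟩
    have hc : Real.cos (Real.arccos (x 0)) = x 0 := Real.cos_arccos hl.le hr.le
    have hs : Real.sin (Real.arccos (x 0)) = Real.sqrt (1 - (x 0) ^ 2) := Real.sin_arccos _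
    have hsq' : Real.sqrt (1 - (x 0) ^ 2) = x (Fin.last 1) := by
      rw [show 1 - (x 0) ^ 2 = (x (Fin.last 1)) ^ 2 by linarith]
      exact Real.sqrt_sq hx1pos.le
    simp only []
    rw [hc, hs, hsq']
    exact (pt_eta x).symm
  · rintro ⟨θ, ⟨h0, hπ⟩, rfl⟩
    refine ⟨pt_mem _ _ (by rw [add_comm]; exact Real.sin_sq_add_cos_sq θ), ?_⟩
    show (0 : ℝ) < Real.sin θ
    exact Real.sin_pos_of_pos_of_lt_pi h0 hπ

lemma upper_preconnected : IsPreconnected (openNorth 1) := by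
  rw [upper_eq]
  exact isPreconnected_Ioo.image _ cont_param.continuousOn

/-- If an open-in-the-sphere set contains the whole open upper semicircle together with
a point of the closed lower semicircle, it contains an antipodal pair. -/
lemma no_equator {k : ℕ} (F : Fin k → Set (EuclideanSpace ℝ (Fin (1 + 1))))
    (hanti : ∀ i : Fin k, ∀ x ∈ F i, -x ∉ F i)
    (j : Fin k) (U : Set (EuclideanSpace ℝ (Fin (1 + 1)))) (hU : IsOpen U)
    (hFU : F j = U ∩ sphereSet 1)
    (hupper : openNorth 1 ⊆ F j) (p : EuclideanSpace ℝ (Fin (1 + 1)))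
    (hp : p ∈ F j) (hp1 : p (Fin.last 1) ≤ 0) : False := by
  have hps : p ∈ sphereSet 1 := by rw [hFU] at hp; exact hp.2
  rcases lt_or_eq_of_le hp1 with hlt | heq
  · have hmem : -p ∈ openNorth 1 := by
      refine ⟨neg_sphere hps, ?_⟩
      show (0 : ℝ) < (-p) (Fin.last 1)
      have : (-p) (Fin.last 1) = -(p (Fin.last 1)) := rfl
      rw [this]; linarith
    exact hanti j p hp (hupper hmem)
  · have hp0 : (p 0) ^ 2 = 1 := by
      have := coord_sq p hps
      rw [heq] at this
      simpa using this
    have hpU : p ∈ U := by rw [hFU] at hp; exact hp.1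
    obtain ⟨ε, hε, hball⟩ := Metric.isOpen_iff.1 hU p hpU
    set δ := min (ε / 2) 1 with hδdef
    have hδ0 : 0 < δ := lt_min (by linarith) one_pos
    have hδ1 : δ ≤ 1 := min_le_right _ _
    have hδε : δ < ε := lt_of_le_of_lt (min_le_left _ _) (by linarith)
    have hsinpos : 0 < Real.sin δ :=
      Real.sin_pos_of_pos_of_lt_pi hδ0 (by linarith [Real.pi_gt_three])
    set y := pt (p 0 * Real.cos δ) (-Real.sin δ) with hy
    have hys : y ∈ sphereSet 1 := by
      apply pt_mem
      have := Real.sin_sq_add_cos_sq δ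
      nlinarith
    have hdist : dist y p < ε := by
      rw [hy, dist_pt', heq]
      have h2 : (p 0 * Real.cos δ - p 0) ^ 2 + (-Real.sin δ - 0) ^ 2 = 2 - 2 * Real.cos δ := by
        have := Real.sin_sq_add_cos_sq δ
        nlinarith
      rw [h2]
      have hle : 2 - 2 * Real.cos δ ≤ δ ^ 2 := by
        nlinarith [Real.one_sub_sq_div_two_le_cos (x := δ)]
      calc Real.sqrt (2 - 2 * Real.cos δ) ≤ Real.sqrt (δ ^ 2) := Real.sqrt_le_sqrt hle
        _ = δ := Real.sqrt_sq hδ0.le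
        _ < ε := hδε
    have hyF : y ∈ F j := by
      rw [hFU]
      exact ⟨hball (Metric.mem_ball.2 hdist), hys⟩
    have hny : -y ∈ openNorth 1 := by
      refine ⟨neg_sphere hys, ?_⟩
      show (0 : ℝ) < (-y) (Fin.last 1)
      have : (-y) (Fin.last 1) = -(y (Fin.last 1)) := rfl
      rw [this]
      have : y (Fin.last 1) = -Real.sin δ := rfl
      rw [this]; linarith
    exact hanti j y hyF (hupper hny)

end CircleCoverAux

open CircleCoverAux Real in
/-- Lower bound of Proposition 5: `f(1,1,m) ≥ 2 + m`. Every antipodal `(1,m)`-fold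
cover of the circle `S^1` by `k` open sets satisfies `k ≥ m + 2`. -/
theorem f_circle_lower_bound (m k : ℕ) (hm : 1 < m)
    (F : Fin k → Set (EuclideanSpace ℝ (Fin (1 + 1))))
    (hcov : IsNMFoldCover 1 m F) (hanti : IsAntipodalFamily F) :
    m + 2 ≤ k := by
  classical
  obtain ⟨⟨hsub, hopen, h1⟩, hm'⟩ := hcov
  by_contra hk
  push_neg at hk
  -- the north pole
  have hN : pt 0 1 ∈ openNorth 1 :=
    ⟨pt_mem 0 1 (by norm_num), show (0 : ℝ) < 1 from one_pos⟩
  have hk1 : m + 1 ≤ k := by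
    have ha := covCount_add_le F hanti (pt 0 1)
    have hb := hm' _ hN
    have hc := h1 _ (neg_sphere hN.1)
    omega
  have hk' : k = m + 1 := by omega
  choose U hUopen hFU using hopen
  have hupcount : ∀ x ∈ openNorth 1, covCount F (-x) ≤ 1 := by
    intro x hx
    have ha := covCount_add_le F hanti x
    have hb := hm' x hx
    omega
  set V : Fin k → Set (EuclideanSpace ℝ (Fin (1 + 1))) := fun i => -(U i) with hV
  have hVopen : ∀ i, IsOpen (V i) := fun i => (hUopen i).neg
  have memV : ∀ x ∈ openNorth 1, ∀ i, (x ∈ V i ↔ -x ∈ F i) := by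
    intro x hx i
    rw [hV]
    simp only [Set.mem_neg]
    rw [hFU i]
    constructor
    · intro h; exact ⟨h, neg_sphere hx.1⟩
    · exact fun h => h.1
  have cover : ∀ x ∈ openNorth 1, ∃ i, x ∈ V i := by
    intro x hx
    obtain ⟨i, hi⟩ := exists_mem_of_one_le F (-x) (h1 _ (neg_sphere hx.1))
    exact ⟨i, (memV x hx i).2 hi⟩
  have disj : ∀ x ∈ openNorth 1, ∀ i j, x ∈ V i → x ∈ V j → i = j := by
    intro x hx i j hi hj
    by_contra hij
    have h2 := two_le_covCount F (-x) ((memV x hx i).1 hi) ((memV x hx j).1 hj) hij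
    have := hupcount x hx
    omega
  obtain ⟨i0, hi0⟩ := cover _ hN
  have hsubV : openNorth 1 ⊆ V i0 :=
    preconn_subset upper_preconnected V hVopen cover disj hN hi0
  have hlow : ∀ x ∈ openNorth 1, -x ∈ F i0 := fun x hx => (memV x hx i0).1 (hsubV hx)
  have hupF : ∀ x ∈ openNorth 1, ∀ i, i ≠ i0 → x ∈ F i := by
    intro x hx i hi
    have hx0 : x ∉ F i0 := fun h => hanti i0 x h (hlow x hx)
    refine all_but_one F x i0 hx0 ?_ i hi
    have := hm' x hx
    omega
  -- the two equator points
  have he : pt 1 0 ∈ sphereSet 1 := pt_mem _ _ (by norm_num)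
  obtain ⟨j, hj⟩ := exists_mem_of_one_le F _ (h1 _ he)
  obtain ⟨j', hj'⟩ := exists_mem_of_one_le F _ (h1 _ (neg_sphere he))
  have hji : j = i0 := by
    by_contra h
    exact no_equator F hanti j (U j) (hUopen j) (hFU j)
      (fun x hx => hupF x hx j h) _ hj (le_of_eq rfl)
  have hj'i : j' = i0 := by
    by_contra h
    refine no_equator F hanti j' (U j') (hUopen j') (hFU j')
      (fun x hx => hupF x hx j' h) _ hj' ?_
    show (-(pt 1 0)) (Fin.last 1) ≤ 0
    have h0 : (-(pt 1 0)) (Fin.last 1) = -((pt 1 0) (Fin.last 1)) := rfl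
    have h1' : (pt 1 0) (Fin.last 1) = 0 := rfl
    rw [h0, h1']
    norm_num
  rw [hji] at hj
  rw [hj'i] at hj'
  exact hanti i0 (pt 1 0) hj hj'
end
end

section
/- Let m > 1. There exists an antipodal (1,m)-fold cover of the circle S^1 consisting of m + 2 open sets. (Upper bound of Proposition 5: f(1,1,m) ≤ 2 + m.) -/
noncomputable section

open scoped RealInnerProductSpace

/-- Upper bound of Proposition 5: `f(1,1,m) ≤ 2 + m`. There exists an antipodal
`(1,m)`-fold cover of the circle `S^1` with `m + 2` open sets. -/
theorem f_circle_upper_bound (m : ℕ) (hm : 1 < m) :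
    ∃ F : Fin (m + 2) → Set (EuclideanSpace ℝ (Fin (1 + 1))),
      IsNMFoldCover 1 m F ∧ IsAntipodalFamily F := by
  classical
  -- half-plane sets
  set S := sphereSet 1 with hS
  set g : Fin (m + 2) → (EuclideanSpace ℝ (Fin (1 + 1)) → ℝ) := fun i x =>
    if (i : ℕ) < m then x 1 else if (i : ℕ) = m then x 0 - x 1 else -(x 0) - x 1 with hg
  refine ⟨fun i => {x | 0 < g i x} ∩ S, ⟨⟨fun i => Set.inter_subset_right, fun i => ?_, ?_⟩, ?_⟩, ?_⟩
  · -- open in sphere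
    refine ⟨{x | 0 < g i x}, ?_, rfl⟩
    have hco : ∀ j : Fin (1 + 1), Continuous fun x : EuclideanSpace ℝ (Fin (1 + 1)) => x j :=
      fun j => (EuclideanSpace.proj j).continuous
    have hc : Continuous (g i) := by
      simp only [hg]
      split_ifs
      · exact hco 1
      · exact (hco 0).sub (hco 1)
      · exact ((hco 0).neg).sub (hco 1)
    exact isOpen_lt continuous_const hc
  · -- 1-fold cover
    intro x hx
    have hx1 : ‖x‖ = 1 := mem_sphere_zero_iff_norm.mp hx
    have hne : x 0 ≠ 0 ∨ x 1 ≠ 0 := by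
      by_contra h
      push_neg at h
      have : x = 0 := by
        ext j
        fin_cases j
        · exact h.1
        · exact h.2
      rw [this] at hx1
      simp at hx1
    have : ∃ i : Fin (m + 2), 0 < g i x := by
      rcases lt_or_ge 0 (x 1) with h1 | h1
      · refine ⟨⟨0, by omega⟩, ?_⟩
        simp only [hg]
        rw [if_pos (show ((⟨0, by omega⟩ : Fin (m+2)) : ℕ) < m by simpa using hm.le.trans_lt' Nat.zero_lt_one)]
        exact h1
      · rcases lt_or_ge (x 1) (x 0) with h2 | h2
        · refine ⟨⟨m, by omega⟩, ?_⟩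
          simp only [hg]
          rw [if_neg (by simp), if_pos (by simp)]
          linarith
        · refine ⟨⟨m + 1, by omega⟩, ?_⟩
          simp only [hg]
          rw [if_neg (by simp), if_neg (by simp)]
          -- here x 0 ≤ x 1 ≤ 0; need -(x 0) - x 1 > 0, i.e. x 0 + x 1 < 0
          rcases hne with h | h
          · have : x 0 < 0 := lt_of_le_of_ne (le_trans h2 h1) h
            linarith
          · have : x 1 < 0 := lt_of_le_of_ne h1 h
            linarith
    obtain ⟨i, hi⟩ := this
    have hne' : Nonempty {j : Fin (m + 2) // x ∈ {y | 0 < g j y} ∩ S} := ⟨⟨i, hi, hx⟩⟩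
    unfold covCount
    exact Nat.card_pos
  · -- m-fold on open north
    intro x hx
    obtain ⟨hxS, hxN⟩ := hx
    have hxN' : 0 < x 1 := by
      have : Fin.last 1 = (1 : Fin 2) := rfl
      rwa [this] at hxN
    have hinj : Function.Injective
        (fun j : Fin m => (⟨⟨(j : ℕ), by omega⟩, by
          refine ⟨?_, hxS⟩
          simp only [hg, Set.mem_setOf_eq]
          rw [if_pos (by exact j.isLt)]
          exact hxN'⟩ : {i : Fin (m + 2) // x ∈ {y | 0 < g i y} ∩ S})) := by
      intro a b hab
      have : ((a : ℕ) : ℕ) = (b : ℕ) := by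
        exact congrArg (fun s => ((s.1 : Fin (m + 2)) : ℕ)) hab
      exact Fin.ext this
    calc m = Nat.card (Fin m) := by simp
    _ ≤ _ := Nat.card_le_card_of_injective _ hinj
  · -- antipodal
    intro i x hx hnx
    have h1 : 0 < g i x := hx.1
    have h2 : 0 < g i (-x) := hnx.1
    have hneg : ∀ j : Fin 2, (-x) j = -(x j) := fun j => rfl
    simp only [hg] at h1 h2
    split_ifs at h1 h2 <;> rw [hneg] at h2 <;> try rw [hneg] at h2
    all_goals linarith
end
end

section
/- Let d ≥ 1 and m > n ≥ 1. There exists an antipodal (n,m)-fold cover of S^d consisting of d + n + m open sets. (Upper bound of Theorem 6: f(d,n,m) ≤ d + n + m.) -/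
noncomputable section

open scoped RealInnerProductSpace

/-! ### Auxiliary lemmas -/

open Finset Polynomial
open scoped fwdDiff

/-- Iterated forward difference of order `D` kills `y ^ j` for `j < D`. -/
private lemma fwdDiff_iter_pow_eq_zero : ∀ (D j : ℕ), j < D →
    (fwdDiff (1 : ℝ))^[D] (fun y : ℝ => y ^ j) = 0 := by
  intro D
  induction D with
  | zero => exact fun j h => absurd h (Nat.not_lt_zero j)
  | succ D ih =>
    intro j hj
    rw [Function.iterate_succ_apply]
    have hΔ : fwdDiff (1 : ℝ) (fun y : ℝ => y ^ j)
        = ∑ i ∈ Finset.range j, ((j.choose i : ℝ) • fun y : ℝ => y ^ i) := by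
      funext y
      simp only [fwdDiff, Finset.sum_apply, Pi.smul_apply, smul_eq_mul]
      have hbin : (y + 1) ^ j = ∑ i ∈ Finset.range (j + 1), y ^ i * (j.choose i : ℝ) := by
        rw [add_pow]
        exact Finset.sum_congr rfl fun i _ => by rw [one_pow, mul_one]
      rw [hbin, Finset.sum_range_succ, Nat.choose_self, Nat.cast_one, mul_one,
        add_sub_cancel_right]
      exact Finset.sum_congr rfl fun i _ => mul_comm _ _
    rw [hΔ, fwdDiff_iter_finset_sum]
    refine Finset.sum_eq_zero fun i hi => ?_
    rw [fwdDiff_iter_const_smul, ih i (by have := Finset.mem_range.mp hi; omega)]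
    simp

/-- Iterated forward difference of order `D` kills polynomials of degree `< D`. -/
private lemma fwdDiff_iter_poly (p : ℝ[X]) (D : ℕ) (hD : p.natDegree < D) :
    (fwdDiff (1 : ℝ))^[D] (fun t : ℝ => p.eval t) = 0 := by
  have hrepr : (fun t : ℝ => p.eval t)
      = ∑ j ∈ Finset.range (p.natDegree + 1), (p.coeff j • fun t : ℝ => t ^ j) := by
    funext t
    simp only [Finset.sum_apply, Pi.smul_apply, smul_eq_mul]
    exact p.eval_eq_sum_range t
  rw [hrepr, fwdDiff_iter_finset_sum]
  refine Finset.sum_eq_zero fun j hj => ?_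
  rw [fwdDiff_iter_const_smul, fwdDiff_iter_pow_eq_zero D j
    (by have := Finset.mem_range.mp hj; omega)]
  simp

/-- Key combinatorial lemma: for a nonzero coefficient vector `c` of length `d+1`,
the polynomial `p(t) = ∑ c l t^l` satisfies `(-1)^j p(j+1) > 0` for at least `n`
values of `j` in `range (d + 2n)`. -/
private lemma alternation_count (d n : ℕ) (c : Fin (d + 1) → ℝ) (hc : c ≠ 0) :
    n ≤ ((Finset.range (d + 2 * n)).filter
      (fun j : ℕ => 0 < (-1 : ℝ) ^ j * ∑ l : Fin (d + 1), c l * ((j : ℝ) + 1) ^ (l : ℕ))).card := by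
  classical
  by_contra hcon
  push_neg at hcon
  set k := d + 2 * n with hk
  set A := (Finset.range k).filter
      (fun j : ℕ => 0 < (-1 : ℝ) ^ j * ∑ l : Fin (d + 1), c l * ((j : ℝ) + 1) ^ (l : ℕ)) with hA
  have hn1 : 1 ≤ n := by by_contra h; omega
  have hAcard : A.card < n := hcon
  -- the polynomial p
  set p : ℝ[X] := ∑ l : Fin (d + 1), Polynomial.C (c l) * Polynomial.X ^ (l : ℕ) with hp
  have hpeval : ∀ t : ℝ, p.eval t = ∑ l : Fin (d + 1), c l * t ^ (l : ℕ) := by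
    intro t
    rw [hp, Polynomial.eval_finset_sum]
    exact Finset.sum_congr rfl fun l _ => by simp
  have hpcoeff : ∀ l0 : Fin (d + 1), p.coeff (l0 : ℕ) = c l0 := by
    intro l0
    rw [hp, Polynomial.finset_sum_coeff]
    rw [Finset.sum_eq_single l0]
    · simp
    · intro l _ hne
      have : ((l0 : ℕ) : ℕ) ≠ (l : ℕ) := fun h => hne (Fin.val_injective h.symm)
      simp [Polynomial.coeff_C_mul, Polynomial.coeff_X_pow, this]
    · intro h; exact absurd (Finset.mem_univ l0) h
  have hpne : p ≠ 0 := by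
    obtain ⟨l0, hl0⟩ := Function.ne_iff.mp hc
    intro h
    apply hl0
    have h2 : p.coeff (l0 : ℕ) = 0 := by rw [h, Polynomial.coeff_zero]
    rw [hpcoeff l0] at h2
    simpa using h2
  have hpdeg : p.natDegree ≤ d := by
    rw [hp]
    refine Polynomial.natDegree_sum_le_of_forall_le _ _ fun l _ => ?_
    exact le_trans (Polynomial.natDegree_C_mul_X_pow_le (c l) (l : ℕ)) (by omega)
  -- the auxiliary polynomial q
  set q : ℝ[X] := ∏ a ∈ A, ((Polynomial.X - Polynomial.C ((a : ℝ) + 1)) ^ 2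
      - Polynomial.C (1 / 4 : ℝ)) with hq
  have hqeval : ∀ t : ℝ, q.eval t = ∏ a ∈ A, ((t - ((a : ℝ) + 1)) ^ 2 - 1 / 4) := by
    intro t
    rw [hq, Polynomial.eval_prod]
    exact Finset.prod_congr rfl fun a _ => by simp
  have hfac_pos : ∀ (j a : ℕ), j ≠ a →
      (0 : ℝ) < (((j : ℝ) + 1) - ((a : ℝ) + 1)) ^ 2 - 1 / 4 := by
    intro j a hja
    have h2 : (1 : ℝ) ≤ ((j : ℝ) - (a : ℝ)) ^ 2 := by
      rcases Nat.lt_or_ge j a with h | h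
      · have hle : (j : ℝ) + 1 ≤ (a : ℝ) := by exact_mod_cast h
        nlinarith
      · have h' : a < j := by omega
        have hle : (a : ℝ) + 1 ≤ (j : ℝ) := by exact_mod_cast h'
        nlinarith
    have h3 : (((j : ℝ) + 1) - ((a : ℝ) + 1)) = ((j : ℝ) - (a : ℝ)) := by ring
    rw [h3]; linarith
  have hq_pos : ∀ j : ℕ, j ∉ A → 0 < q.eval ((j : ℝ) + 1) := by
    intro j hj
    rw [hqeval]
    refine Finset.prod_pos fun a ha => hfac_pos j a fun h => hj (h ▸ ha)
  have hq_neg : ∀ j ∈ A, q.eval ((j : ℝ) + 1) < 0 := by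
    intro j hj
    rw [hqeval, ← Finset.mul_prod_erase _ _ hj]
    refine mul_neg_of_neg_of_pos (by norm_num) ?_
    refine Finset.prod_pos fun a ha => hfac_pos j a ?_
    intro h
    exact (Finset.ne_of_mem_erase ha) h.symm
  have hqdeg : q.natDegree ≤ 2 * A.card := by
    rw [hq]
    calc (∏ a ∈ A, ((Polynomial.X - Polynomial.C ((a : ℝ) + 1)) ^ 2
          - Polynomial.C (1 / 4 : ℝ))).natDegree
        ≤ ∑ a ∈ A, ((Polynomial.X - Polynomial.C ((a : ℝ) + 1)) ^ 2
          - Polynomial.C (1 / 4 : ℝ)).natDegree := Polynomial.natDegree_prod_le _ _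
      _ ≤ ∑ _a ∈ A, 2 := by
          refine Finset.sum_le_sum fun a _ => ?_
          refine le_trans (Polynomial.natDegree_sub_le _ _) ?_
          have e1 : ((Polynomial.X - Polynomial.C ((a : ℝ) + 1)) ^ 2).natDegree = 2 := by
            rw [Polynomial.natDegree_pow, Polynomial.natDegree_X_sub_C]
          rw [e1, Polynomial.natDegree_C]
          simp
      _ = 2 * A.card := by rw [Finset.sum_const, smul_eq_mul, mul_comm]
  have hqne : q ≠ 0 := by
    intro h
    have hkA : k ∉ A := by
      intro hmem
      have := Finset.mem_range.mp (Finset.mem_filter.mp hmem).1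
      omega
    have := hq_pos k hkA
    rw [h] at this
    simp at this
  -- the product polynomial r
  set r : ℝ[X] := p * q with hr
  have hrne : r ≠ 0 := mul_ne_zero hpne hqne
  have hrdeg : r.natDegree < k - 1 := by
    have h1 : r.natDegree ≤ p.natDegree + q.natDegree := Polynomial.natDegree_mul_le
    omega
  have hsign : ∀ j ∈ Finset.range k, (-1 : ℝ) ^ j * r.eval ((j : ℝ) + 1) ≤ 0 := by
    intro j hj
    rw [hr, Polynomial.eval_mul]
    by_cases hjA : j ∈ A
    · have h1 : 0 < (-1 : ℝ) ^ j * p.eval ((j : ℝ) + 1) := by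
        rw [hpeval]
        exact (Finset.mem_filter.mp hjA).2
      have h2 := hq_neg j hjA
      nlinarith
    · have h1 : (-1 : ℝ) ^ j * p.eval ((j : ℝ) + 1) ≤ 0 := by
        rw [hpeval]
        by_contra h
        exact hjA (Finset.mem_filter.mpr ⟨hj, lt_of_not_ge h⟩)
      have h2 := hq_pos j hjA
      nlinarith
  -- apply the forward-difference identity
  have hvanish : (fwdDiff (1 : ℝ))^[k - 1] (fun t : ℝ => r.eval t) 1 = 0 := by
    rw [fwdDiff_iter_poly r (k - 1) hrdeg]; simp
  rw [fwdDiff_iter_eq_sum_shift] at hvanish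
  have hk1 : k - 1 + 1 = k := by omega
  rw [hk1] at hvanish
  have hterm : ∀ i ∈ Finset.range k,
      (((-1 : ℤ) ^ (k - 1 - i) * ((k - 1).choose i : ℤ)) : ℤ) • r.eval (1 + i • (1 : ℝ))
        = (-1 : ℝ) ^ (k - 1) *
          (((k - 1).choose i : ℝ) * ((-1 : ℝ) ^ i * r.eval ((i : ℝ) + 1))) := by
    intro i hi
    have hik : i ≤ k - 1 := by have := Finset.mem_range.mp hi; omega
    have hpow : (-1 : ℝ) ^ (k - 1 - i) = (-1 : ℝ) ^ (k - 1) * (-1 : ℝ) ^ i := by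
      rw [← pow_add]
      have hsplit : k - 1 + i = (k - 1 - i) + 2 * i := by omega
      rw [hsplit, pow_add, pow_mul]
      norm_num
    have harg : (1 : ℝ) + i • (1 : ℝ) = (i : ℝ) + 1 := by
      simp [add_comm]
    rw [harg, zsmul_eq_mul]
    push_cast
    rw [hpow]
    ring
  rw [Finset.sum_congr rfl hterm] at hvanish
  rw [← Finset.mul_sum] at hvanish
  have hS : ∑ i ∈ Finset.range k,
      (((k - 1).choose i : ℝ) * ((-1 : ℝ) ^ i * r.eval ((i : ℝ) + 1))) = 0 := by
    rcases mul_eq_zero.mp hvanish with h | h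
    · exact absurd h (by positivity)
    · exact h
  have hnonpos : ∀ i ∈ Finset.range k,
      (((k - 1).choose i : ℝ) * ((-1 : ℝ) ^ i * r.eval ((i : ℝ) + 1))) ≤ 0 := by
    intro i hi
    have h1 := hsign i hi
    have h2 : (0 : ℝ) ≤ ((k - 1).choose i : ℝ) := Nat.cast_nonneg _
    nlinarith
  have hzero := (Finset.sum_eq_zero_iff_of_nonpos hnonpos).mp hS
  have hreval : ∀ i ∈ Finset.range k, r.eval ((i : ℝ) + 1) = 0 := by
    intro i hi
    have h := hzero i hi
    have hik : i ≤ k - 1 := by have := Finset.mem_range.mp hi; omega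
    have hch : (0 : ℝ) < ((k - 1).choose i : ℝ) := by
      exact_mod_cast Nat.choose_pos hik
    have hne : (-1 : ℝ) ^ i ≠ 0 := by
      simp [pow_ne_zero]
    rcases mul_eq_zero.mp h with h' | h'
    · exact absurd h' (ne_of_gt hch)
    · rcases mul_eq_zero.mp h' with h'' | h''
      · exact absurd h'' hne
      · exact h''
  -- contradiction: r has too many roots
  have : r = 0 := by
    refine Polynomial.eq_zero_of_natDegree_lt_card_of_eval_eq_zero' r
      ((Finset.range k).image (fun i : ℕ => (i : ℝ) + 1)) ?_ ?_
    · intro t ht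
      obtain ⟨i, hi, rfl⟩ := Finset.mem_image.mp ht
      exact hreval i hi
    · rw [Finset.card_image_of_injective]
      · rw [Finset.card_range]; omega
      · intro a b hab
        have h2 : (a : ℝ) + 1 = (b : ℝ) + 1 := hab
        have : (a : ℝ) = b := by linarith
        exact_mod_cast this
  exact hrne this

/-- Upper bound of Theorem 6: `f(d,n,m) ≤ d + n + m`. There exists an antipodal
`(n,m)`-fold cover of `S^d` with `d + n + m` open sets. -/
theorem f_upper_bound (d n m : ℕ) (hd : 1 ≤ d) (hn : 1 ≤ n) (hnm : n < m) :
    ∃ F : Fin (d + n + m) → Set (EuclideanSpace ℝ (Fin (d + 1))),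
      IsNMFoldCover n m F ∧ IsAntipodalFamily F := by
  classical
  set K := d + n + m with hK
  set s := m - n with hs
  have hsK : s + (d + 2 * n) = K := by omega
  -- the linear functionals defining the hemispheres
  set G : ℕ → EuclideanSpace ℝ (Fin (d + 1)) → ℝ := fun i x =>
    if i < s then x (Fin.last d)
    else (-1 : ℝ) ^ (i - s) * ∑ l : Fin (d + 1), x l * (((i - s : ℕ) : ℝ) + 1) ^ (l : ℕ)
    with hG
  set F : Fin K → Set (EuclideanSpace ℝ (Fin (d + 1))) := fun i =>
    {x | 0 < G (i : ℕ) x} ∩ sphereSet d with hF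
  have hGneg : ∀ (i : ℕ) (x : EuclideanSpace ℝ (Fin (d + 1))), G i (-x) = -G i x := by
    intro i x
    rw [hG]
    by_cases h : i < s
    · simp only [if_pos h]
      rfl
    · simp only [if_neg h]
      have : ∑ l : Fin (d + 1), (-x) l * (((i - s : ℕ) : ℝ) + 1) ^ (l : ℕ)
          = -∑ l : Fin (d + 1), x l * (((i - s : ℕ) : ℝ) + 1) ^ (l : ℕ) := by
        rw [← Finset.sum_neg_distrib]
        refine Finset.sum_congr rfl fun l _ => ?_
        rw [show ((-x) l : ℝ) = -(x l) from rfl, neg_mul]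
      rw [this, mul_neg]
  have hGcont : ∀ i : ℕ, Continuous (G i) := by
    intro i
    rw [hG]
    by_cases h : i < s
    · simp only [if_pos h]
      exact (EuclideanSpace.proj (Fin.last d)).continuous
    · simp only [if_neg h]
      refine continuous_const.mul ?_
      refine continuous_finset_sum _ fun l _ => ?_
      exact ((EuclideanSpace.proj l).continuous).mul continuous_const
  -- a lower bound on covCount from a finset of witnessing indices
  have covLB : ∀ (x : EuclideanSpace ℝ (Fin (d + 1))) (T : Finset (Fin K)),
      (∀ i ∈ T, x ∈ F i) → T.card ≤ covCount F x := by
    intro x T hT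
    have h1 : (T : Set (Fin K)) ⊆ {i : Fin K | x ∈ F i} := by
      intro i hi
      exact hT i (by simpa using hi)
    calc T.card = (T : Set (Fin K)).ncard := (Set.ncard_coe_finset T).symm
      _ ≤ Set.ncard {i : Fin K | x ∈ F i} := Set.ncard_le_ncard h1 (Set.toFinite _)
      _ = Nat.card {i : Fin K // x ∈ F i} := (Nat.card_coe_set_eq _).symm
      _ = covCount F x := rfl
  -- the main counting finset for an arbitrary sphere point
  have main_count : ∀ x ∈ sphereSet d, ∃ T : Finset (Fin K),
      n ≤ T.card ∧ (∀ i ∈ T, x ∈ F i) ∧ (∀ i ∈ T, s ≤ (i : ℕ)) := by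
    intro x hx
    have hxne : x ≠ 0 := by
      intro h
      have : ‖x‖ = 1 := by
        simpa [sphereSet] using hx
      rw [h] at this
      simp at this
    have hcne : (fun l : Fin (d + 1) => x l) ≠ 0 := by
      intro h
      apply hxne
      ext l
      exact congrFun h l
    have hcount := alternation_count d n (fun l => x l) hcne
    set T0 := (Finset.range (d + 2 * n)).filter
      (fun j : ℕ => 0 < (-1 : ℝ) ^ j * ∑ l : Fin (d + 1), x l * ((j : ℝ) + 1) ^ (l : ℕ)) with hT0
    set T0' := T0.image (fun j => s + j) with hT0'
    have hbound : ∀ a ∈ T0', a < K := by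
      intro a ha
      obtain ⟨j, hj, rfl⟩ := Finset.mem_image.mp ha
      have := Finset.mem_range.mp (Finset.mem_filter.mp hj).1
      omega
    refine ⟨T0'.attachFin hbound, ?_, ?_, ?_⟩
    · rw [Finset.card_attachFin, hT0', Finset.card_image_of_injective _ (add_right_injective s)]
      exact hcount
    · intro i hi
      have hival : (i : ℕ) ∈ T0' := (Finset.mem_attachFin hbound).mp hi
      obtain ⟨j, hj, hji⟩ := Finset.mem_image.mp hival
      have hcond := (Finset.mem_filter.mp hj).2
      refine ⟨?_, hx⟩
      show 0 < G (i : ℕ) x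
      rw [hG]
      have h1 : ¬ ((i : ℕ) < s) := by omega
      have h2 : (i : ℕ) - s = j := by omega
      simp only [if_neg h1, h2]
      exact hcond
    · intro i hi
      have hival : (i : ℕ) ∈ T0' := (Finset.mem_attachFin hbound).mp hi
      obtain ⟨j, hj, hji⟩ := Finset.mem_image.mp hival
      omega
  refine ⟨F, ⟨⟨fun i => Set.inter_subset_right, fun i => ?_, fun x hx => ?_⟩, ?_⟩, ?_⟩
  · -- open in sphere
    exact ⟨{x | 0 < G (i : ℕ) x}, isOpen_lt continuous_const (hGcont i), rfl⟩
  · -- n-fold cover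
    obtain ⟨T, hTcard, hTmem, _⟩ := main_count x hx
    exact le_trans hTcard (covLB x T hTmem)
  · -- m-fold cover of the open northern hemisphere
    intro x hx
    obtain ⟨hxs, hxn⟩ := hx
    obtain ⟨T, hTcard, hTmem, hTval⟩ := main_count x hxs
    have hbound1 : ∀ a ∈ Finset.range s, a < K := by
      intro a ha
      have := Finset.mem_range.mp ha
      omega
    set T1 := (Finset.range s).attachFin hbound1 with hT1
    have hT1mem : ∀ i ∈ T1, x ∈ F i := by
      intro i hi
      have hival : (i : ℕ) ∈ Finset.range s := (Finset.mem_attachFin hbound1).mp hi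
      have h1 : (i : ℕ) < s := Finset.mem_range.mp hival
      refine ⟨?_, hxs⟩
      show 0 < G (i : ℕ) x
      rw [hG]
      simp only [if_pos h1]
      exact hxn
    have hdisj : Disjoint T1 T := by
      rw [Finset.disjoint_left]
      intro i hi1 hi2
      have h1 : (i : ℕ) < s := Finset.mem_range.mp ((Finset.mem_attachFin hbound1).mp hi1)
      have h2 := hTval i hi2
      omega
    have hunion : ∀ i ∈ T1 ∪ T, x ∈ F i := by
      intro i hi
      rcases Finset.mem_union.mp hi with h | h
      · exact hT1mem i h
      · exact hTmem i h
    have hcard : m ≤ (T1 ∪ T).card := by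
      rw [Finset.card_union_of_disjoint hdisj, hT1, Finset.card_attachFin, Finset.card_range]
      omega
    exact le_trans hcard (covLB x (T1 ∪ T) hunion)
  · -- antipodal
    intro i x hx hnx
    have h1 : 0 < G (i : ℕ) x := hx.1
    have h2 : 0 < G (i : ℕ) (-x) := hnx.1
    rw [hGneg] at h2
    linarith
end
end

section
/- (Gale's n-fold cover.) For every d ≥ 1 and n ≥ 1, there exist points p_1, …, p_{d+2n} on the unit sphere S^d ⊂ ℝ^{d+1} such that the family of open hemispheres H_i = { x ∈ S^d : ⟨x, p_i⟩ > 0 }, for i = 1, …, d + 2n, is an antipodal n-fold cover of S^d: every point of S^d lies in at least n of the sets H_i, and no H_i contains a pair of antipodal points x and −x. -/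
noncomputable section

open scoped RealInnerProductSpace

open Polynomial

private lemma peel (L : ℕ) (Q : ℕ → Prop) [DecidablePred Q] :
    ((Finset.range (L+1)).filter Q).card
      = ((Finset.range L).filter (fun j => Q (j+1))).card + (if Q 0 then 1 else 0) := by
  simp only [Finset.card_filter]
  exact Finset.sum_range_succ' _ L

private lemma parity_count (b : ℤ) (hb : b = 0 ∨ b = 1) :
    ∀ N : ℕ, ∀ v : ℕ → ℤ,
    (∀ j, j + 1 < N → v j < v (j + 1)) →
    2 * (N:ℤ) + v 0 ≤ 2 * (((Finset.range N).filter fun j => v j % 2 = b).card : ℤ) + v (N - 1) + 2 := by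
  intro N
  induction N using Nat.strong_induction_on with
  | _ N IH =>
    rcases N with _ | N1
    · intro v hv; simp
    rcases N1 with _ | M
    · intro v hv
      have h0 : 0 ≤ (((Finset.range 1).filter fun j => v j % 2 = b).card : ℤ) := by positivity
      have e : (1:ℕ) - 1 = 0 := rfl
      rw [e]
      omega
    · intro v hv
      have peel1 := peel (M+1) (fun j => v j % 2 = b)
      have hv01 : v 0 < v 1 := hv 0 (by omega)
      have e1 : M + 2 - 1 = M + 1 := by omega
      rw [e1]
      by_cases hQ0 : v 0 % 2 = b
      · have IH1 := IH (M+1) (by omega) (fun j => v (j+1)) (fun j hj => hv (j+1) (by omega))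
        norm_num at IH1
        rw [peel1, if_pos hQ0]
        push_cast
        omega
      · by_cases hQ1 : v 1 % 2 = b
        · rcases M with _ | M'
          · have hmem : 1 ∈ (Finset.range 2).filter fun j => v j % 2 = b := by
              simp only [Finset.mem_filter, Finset.mem_range]
              exact ⟨by omega, hQ1⟩
            have hcard : 1 ≤ ((Finset.range 2).filter fun j => v j % 2 = b).card :=
              Finset.card_pos.2 ⟨1, hmem⟩
            norm_num
            omega
          · have hv12 : v 1 < v 2 := hv 1 (by omega)
            have peel2 := peel (M'+1) (fun j => v (j+1) % 2 = b)
            have IH2 := IH (M'+1) (by omega) (fun j => v (j+2)) (fun j hj => hv (j+2) (by omega))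
            norm_num at IH2 peel2
            rw [peel1, peel2, if_pos hQ1, if_neg hQ0]
            simp only [show ∀ j : ℕ, j + 1 + 1 = j + 2 from fun _ => rfl]
            push_cast
            omega
        · have IH1 := IH (M+1) (by omega) (fun j => v (j+1)) (fun j hj => hv (j+1) (by omega))
          norm_num at IH1
          rw [peel1, if_neg hQ0]
          have hpar : v 0 + 2 ≤ v 1 := by rcases hb with rfl | rfl <;> omega
          push_cast
          omega



private def rc (P : Polynomial ℝ) (i : ℕ) : ℕ :=
  Multiset.card (P.roots.filter fun r => r < (i:ℝ))

private lemma prod_neg_multiset : ∀ (s : Multiset ℝ), (∀ x ∈ s, x < 0) →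
    0 < (-1:ℝ)^(Multiset.card s) * s.prod := by
  intro s
  induction s using Multiset.induction_on with
  | empty => intro _; simp
  | cons a s ih =>
    intro h
    have ha : a < 0 := h a (Multiset.mem_cons_self a s)
    have hs := ih (fun x hx => h x (Multiset.mem_cons_of_mem hx))
    have h2 : (0:ℝ) < (-a) * ((-1)^(Multiset.card s) * s.prod) := mul_pos (by linarith) hs
    have heq : (-1:ℝ)^(Multiset.card (a ::ₘ s)) * (a ::ₘ s).prod
        = (-a) * ((-1)^(Multiset.card s) * s.prod) := by
      rw [Multiset.prod_cons, Multiset.card_cons, pow_succ]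
      ring
    rw [heq]; exact h2

private lemma poly_sign_const (Q : Polynomial ℝ) (hQ : ∀ t : ℝ, Q.eval t ≠ 0)
    (a : ℝ) (ha : 0 < Q.eval a) (t : ℝ) : 0 < Q.eval t := by
  by_contra h
  push_neg at h
  have ht : Q.eval t < 0 := lt_of_le_of_ne h (hQ t)
  rcases le_total a t with hat | hta
  · obtain ⟨c, _, hc⟩ := intermediate_value_Icc' hat Q.continuous.continuousOn
      (Set.mem_Icc.2 ⟨le_of_lt ht, le_of_lt ha⟩)
    exact hQ c hc
  · obtain ⟨c, _, hc⟩ := intermediate_value_Icc hta Q.continuous.continuousOn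
      (Set.mem_Icc.2 ⟨le_of_lt ht, le_of_lt ha⟩)
    exact hQ c hc

private lemma sign_lemma (P : Polynomial ℝ) (hP : P ≠ 0) :
    ∃ b : ℤ, (b = 0 ∨ b = 1) ∧
      ∀ i : ℕ, P.eval (i:ℝ) ≠ 0 →
        ((0 < (-1:ℝ)^i * P.eval (i:ℝ)) ↔ ((i : ℤ) + (rc P i : ℤ)) % 2 = b) := by
  classical
  obtain ⟨Q, hPQ⟩ := prod_multiset_X_sub_C_dvd P
  have hQ0 : Q ≠ 0 := by
    intro h; exact hP (by rw [hPQ, h, mul_zero])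
  have hprodne : (P.roots.map fun a => X - C a).prod ≠ 0 := by
    apply Polynomial.Monic.ne_zero
    apply monic_multiset_prod_of_monic
    intro a _; exact monic_X_sub_C a
  have hroots : Q.roots = 0 := by
    have h1 := Polynomial.roots_mul (p := (P.roots.map fun a => X - C a).prod) (q := Q)
      (by rw [← hPQ]; exact hP)
    rw [← hPQ, Polynomial.roots_multiset_prod_X_sub_C] at h1
    have := congrArg Multiset.card h1
    rw [Multiset.card_add] at this
    have : Multiset.card Q.roots = 0 := by omega
    exact Multiset.card_eq_zero.1 this
  have hQne : ∀ t : ℝ, Q.eval t ≠ 0 := by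
    intro t ht
    have : t ∈ Q.roots := Polynomial.mem_roots'.2 ⟨hQ0, ht⟩
    rw [hroots] at this
    simp at this
  have heval : ∀ t : ℝ, P.eval t = (P.roots.map fun a => t - a).prod * Q.eval t := by
    intro t
    conv_lhs => rw [hPQ]
    rw [Polynomial.eval_mul, Polynomial.eval_multiset_prod]
    congr 2
    rw [Multiset.map_map]
    apply Multiset.map_congr rfl
    intro a _
    simp
  -- the constant sign τ
  set τ : ℝ := (if 0 < Q.eval 0 then (1:ℝ) else -1) * (-1)^(Multiset.card P.roots) with hτdef
  have hQsign : ∀ t : ℝ, 0 < (if 0 < Q.eval 0 then (1:ℝ) else -1) * Q.eval t := by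
    intro t
    split_ifs with h0
    · rw [one_mul]; exact poly_sign_const Q hQne 0 h0 t
    · have h0' : Q.eval 0 < 0 := lt_of_le_of_ne (not_lt.1 h0) (hQne 0)
      have : Q.eval t < 0 := by
        by_contra hh
        push_neg at hh
        have : 0 < Q.eval t := lt_of_le_of_ne hh (Ne.symm (hQne t))
        exact absurd (poly_sign_const Q hQne t this 0) (not_lt.2 (le_of_lt h0'))
      nlinarith
  have key : ∀ i : ℕ, P.eval (i:ℝ) ≠ 0 → 0 < τ * (-1)^(rc P i) * P.eval (i:ℝ) := by
    intro i hi
    have hinr : (i:ℝ) ∉ P.roots := by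
      intro h
      exact hi ((Polynomial.mem_roots'.1 h).2)
    set A := P.roots.filter (fun r => r < (i:ℝ)) with hA
    set B := P.roots.filter (fun r => ¬ r < (i:ℝ)) with hB
    have hsplit : A + B = P.roots := Multiset.filter_add_not _ _
    have hcards : Multiset.card P.roots = rc P i + Multiset.card B := by
      rw [← hsplit, Multiset.card_add]; rfl
    have p1 : 0 < (A.map fun a => (i:ℝ) - a).prod := by
      apply Multiset.prod_pos
      intro x hx
      obtain ⟨a, ha, rfl⟩ := Multiset.mem_map.1 hx
      have : a < (i:ℝ) := (Multiset.mem_filter.1 ha).2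
      linarith
    have p2 : 0 < (-1:ℝ)^(Multiset.card B) * (B.map fun a => (i:ℝ) - a).prod := by
      have := prod_neg_multiset (B.map fun a => (i:ℝ) - a) ?_
      · rwa [Multiset.card_map] at this
      · intro x hx
        obtain ⟨a, ha, rfl⟩ := Multiset.mem_map.1 hx
        have h1 : ¬ a < (i:ℝ) := (Multiset.mem_filter.1 ha).2
        have h2 : a ≠ (i:ℝ) := by
          intro h; rw [h] at ha; exact hinr (Multiset.mem_of_mem_filter ha)
        have : (i:ℝ) < a := lt_of_le_of_ne (not_lt.1 h1) (Ne.symm h2)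
        linarith
    have hpow : ((-1:ℝ))^(Multiset.card P.roots) * (-1)^(rc P i) = (-1)^(Multiset.card B) := by
      rw [← pow_add, hcards]
      have e : rc P i + Multiset.card B + rc P i = Multiset.card B + 2 * (rc P i) := by ring
      rw [e, pow_add, pow_mul, neg_one_sq, one_pow, mul_one]
    have hevali : P.eval (i:ℝ)
        = (A.map fun a => (i:ℝ) - a).prod * (B.map fun a => (i:ℝ) - a).prod * Q.eval (i:ℝ) := by
      rw [heval (i:ℝ), ← hsplit, Multiset.map_add, Multiset.prod_add]
    rw [hevali, hτdef]
    have heq : (if 0 < Q.eval 0 then (1:ℝ) else -1) * (-1)^(Multiset.card P.roots) * (-1)^(rc P i) *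
        ((A.map fun a => (i:ℝ) - a).prod * (B.map fun a => (i:ℝ) - a).prod * Q.eval (i:ℝ))
        = ((if 0 < Q.eval 0 then (1:ℝ) else -1) * Q.eval (i:ℝ)) *
          (((-1)^(Multiset.card B) * (B.map fun a => (i:ℝ) - a).prod) * (A.map fun a => (i:ℝ) - a).prod) := by
      rw [mul_assoc ((if 0 < Q.eval 0 then (1:ℝ) else -1)) _ ((-1:ℝ)^(rc P i)), hpow]
      ring
    rw [heq]
    exact mul_pos (hQsign (i:ℝ)) (mul_pos p2 p1)
  -- τ is ±1
  have hτ : τ = 1 ∨ τ = -1 := by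
    rw [hτdef]
    rcases Nat.even_or_odd (Multiset.card P.roots) with he | ho
    · rw [he.neg_one_pow]; split_ifs <;> norm_num
    · rw [ho.neg_one_pow]; split_ifs <;> norm_num
  have hττ : τ * τ = 1 := by rcases hτ with h | h <;> rw [h] <;> norm_num
  -- final
  refine ⟨if τ = 1 then 0 else 1, by split_ifs <;> simp, ?_⟩
  intro i hi
  have hk := key i hi
  set A := τ * (-1)^(rc P i) * P.eval (i:ℝ) with hAdef
  have hrr : (-1:ℝ)^(rc P i) * (-1)^(rc P i) = 1 := by
    rw [← pow_add]
    exact Even.neg_one_pow ⟨rc P i, by ring⟩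
  have h2 : (-1:ℝ)^i * P.eval (i:ℝ) = ((-1)^(i + rc P i) * τ) * A := by
    rw [hAdef, pow_add]
    linear_combination (-(-1:ℝ)^i * P.eval (i:ℝ) * ((-1:ℝ)^(rc P i) * (-1)^(rc P i))) * hττ +
      (-(-1:ℝ)^i * P.eval (i:ℝ)) * hrr
  rw [h2]
  have hiff : 0 < ((-1:ℝ)^(i + rc P i) * τ) * A ↔ 0 < (-1:ℝ)^(i + rc P i) * τ := by
    constructor
    · intro h
      by_contra hcon
      push_neg at hcon
      nlinarith
    · intro h; exact mul_pos h hk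
  rw [hiff]
  rcases Nat.even_or_odd (i + rc P i) with he | ho
  · have hm : ((i:ℤ) + (rc P i : ℤ)) % 2 = 0 := by
      have := Nat.even_iff.1 he; omega
    rw [he.neg_one_pow, one_mul, hm]
    rcases hτ with h | h <;> rw [h] <;> norm_num
  · have hm : ((i:ℤ) + (rc P i : ℤ)) % 2 = 1 := by
      have := Nat.odd_iff.1 ho; omega
    rw [ho.neg_one_pow, hm]
    rcases hτ with h | h <;> rw [h] <;> norm_num

private lemma card_cast_le (P : Polynomial ℝ) (hP : P ≠ 0) (s : Finset ℕ)
    (q : ℝ → Prop) [DecidablePred q]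
    (h : ∀ x ∈ s, P.eval (x:ℝ) = 0 ∧ q (x:ℝ)) :
    s.card ≤ Multiset.card (P.roots.filter q) := by
  have h1 : s.image (fun x : ℕ => (x:ℝ)) ⊆ (P.roots.filter q).toFinset := by
    intro r hr
    simp only [Finset.mem_image] at hr
    obtain ⟨x, hx, rfl⟩ := hr
    rw [Multiset.mem_toFinset, Multiset.mem_filter]
    exact ⟨Polynomial.mem_roots'.2 ⟨hP, (h x hx).1⟩, (h x hx).2⟩
  calc s.card = (s.image (fun x : ℕ => (x:ℝ))).card :=
        (Finset.card_image_of_injective s Nat.cast_injective).symm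
    _ ≤ (P.roots.filter q).toFinset.card := Finset.card_le_card h1
    _ ≤ Multiset.card (P.roots.filter q) := Multiset.toFinset_card_le _

private lemma rc_le (P : Polynomial ℝ) (i : ℕ) : rc P i ≤ Multiset.card P.roots :=
  Multiset.card_le_card (Multiset.filter_le _ _)

private lemma rc_pre (P : Polynomial ℝ) (hP : P ≠ 0) (a : ℕ)
    (h : ∀ x : ℕ, x < a → P.eval (x:ℝ) = 0) : a ≤ rc P a := by
  have := card_cast_le P hP (Finset.range a) (fun r => r < (a:ℝ)) ?_
  · rwa [Finset.card_range] at this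
  · intro x hx
    rw [Finset.mem_range] at hx
    refine ⟨h x hx, ?_⟩
    show (x:ℝ) < (a:ℝ)
    exact_mod_cast hx

private lemma rc_gap (P : Polynomial ℝ) (hP : P ≠ 0) (a b : ℕ) (hab : a < b)
    (h : ∀ x : ℕ, a < x → x < b → P.eval (x:ℝ) = 0) :
    rc P a + (b - a - 1) ≤ rc P b := by
  classical
  have hsplit : rc P b
      = Multiset.card ((P.roots.filter fun r => r < (b:ℝ)).filter fun r => r < (a:ℝ))
      + Multiset.card ((P.roots.filter fun r => r < (b:ℝ)).filter fun r => ¬ r < (a:ℝ)) := by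
    rw [← Multiset.card_add, Multiset.filter_add_not]
    rfl
  have h1 : (P.roots.filter fun r => r < (b:ℝ)).filter (fun r => r < (a:ℝ))
      = P.roots.filter fun r => r < (a:ℝ) := by
    rw [Multiset.filter_filter]
    apply Multiset.filter_congr
    intro r _
    constructor
    · intro hr; exact hr.1
    · intro hr; exact ⟨hr, lt_of_lt_of_le hr (by exact_mod_cast le_of_lt hab)⟩
  have h2 : (P.roots.filter fun r => r < (b:ℝ)).filter (fun r => ¬ r < (a:ℝ))
      = P.roots.filter fun r => (¬ r < (a:ℝ)) ∧ r < (b:ℝ) := by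
    rw [Multiset.filter_filter]
  have h3 : b - a - 1 ≤ Multiset.card (P.roots.filter fun r => (¬ r < (a:ℝ)) ∧ r < (b:ℝ)) := by
    have := card_cast_le P hP (Finset.Ioo a b) (fun r => (¬ r < (a:ℝ)) ∧ r < (b:ℝ)) ?_
    · rwa [Nat.card_Ioo] at this
    · intro x hx
      rw [Finset.mem_Ioo] at hx
      refine ⟨h x hx.1 hx.2, ?_, ?_⟩
      · push_neg
        exact_mod_cast le_of_lt hx.1
      · exact_mod_cast hx.2
  rw [hsplit, h1, h2]
  have : rc P a = Multiset.card (P.roots.filter fun r => r < (a:ℝ)) := rfl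
  omega

private lemma rc_post (P : Polynomial ℝ) (hP : P ≠ 0) (a k : ℕ) (hak : a < k)
    (h : ∀ x : ℕ, a < x → x < k → P.eval (x:ℝ) = 0) :
    rc P a + (k - 1 - a) ≤ Multiset.card P.roots := by
  classical
  have hsplit : Multiset.card P.roots
      = rc P a + Multiset.card (P.roots.filter fun r => ¬ r < (a:ℝ)) := by
    rw [rc, ← Multiset.card_add, Multiset.filter_add_not]
  have h3 : k - 1 - a ≤ Multiset.card (P.roots.filter fun r => ¬ r < (a:ℝ)) := by
    have hle := card_cast_le P hP (Finset.Ioo a k) (fun r => ¬ r < (a:ℝ)) ?_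
    · rw [Nat.card_Ioo] at hle
      omega
    · intro x hx
      rw [Finset.mem_Ioo] at hx
      refine ⟨h x hx.1 hx.2, ?_⟩
      push_neg
      exact_mod_cast le_of_lt hx.1
  omega

private lemma count_good (d n : ℕ) (P : Polynomial ℝ) (hP : P ≠ 0)
    (hdeg : P.natDegree ≤ d) (hn : 1 ≤ n) :
    n ≤ ((Finset.range (d + 2*n)).filter fun i : ℕ => 0 < (-1:ℝ)^i * P.eval (i:ℝ)).card := by
  classical
  set k := d + 2 * n with hk
  obtain ⟨b, hb01, hbiff⟩ := sign_lemma P hP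
  set T : Finset ℕ := (Finset.range k).filter (fun i => P.eval (i:ℝ) ≠ 0) with hT
  have hm : Multiset.card P.roots ≤ d := le_trans (Polynomial.card_roots' P) hdeg
  have hTmem : ∀ x : ℕ, x ∈ T ↔ (x < k ∧ P.eval (x:ℝ) ≠ 0) := by
    intro x
    rw [hT, Finset.mem_filter, Finset.mem_range]
  set N := T.card with hN
  have hN1 : 1 ≤ N := by
    by_contra hcon
    push_neg at hcon
    have hT0 : T = ∅ := Finset.card_eq_zero.1 (by omega)
    have hall : ∀ x : ℕ, x < k → P.eval (x:ℝ) = 0 := by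
      intro x hx
      by_contra hx0
      have : x ∈ T := (hTmem x).2 ⟨hx, hx0⟩
      rw [hT0] at this
      simp at this
    have h1 : k ≤ rc P k := rc_pre P hP k hall
    have h2 : rc P k ≤ Multiset.card P.roots := rc_le P k
    omega
  let ι : Fin N ↪o ℕ := T.orderEmbOfFin rfl
  have hιmem : ∀ j : Fin N, ι j ∈ T := fun j => T.orderEmbOfFin_mem rfl j
  have hιlt : ∀ j : Fin N, ι j < k := fun j => ((hTmem _).1 (hιmem j)).1
  have hιne : ∀ j : Fin N, P.eval ((ι j : ℕ):ℝ) ≠ 0 := fun j => ((hTmem _).1 (hιmem j)).2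
  have hιsurj : ∀ x ∈ T, ∃ j : Fin N, ι j = x := by
    intro x hx
    have : x ∈ Set.range ι := by
      rw [Finset.range_orderEmbOfFin]
      exact hx
    exact this
  have hιmono : StrictMono ι := (T.orderEmbOfFin rfl).strictMono
  -- the function v
  set w : Fin N → ℤ := fun j => 2*(j:ℤ) + (rc P (ι j) : ℤ) - ((ι j : ℕ) : ℤ) with hw
  set v : ℕ → ℤ := fun j => if h : j < N then w ⟨j, h⟩ else 0 with hv
  -- monotonicity
  have hvmono : ∀ j, j + 1 < N → v j < v (j + 1) := by
    intro j hj
    have hj1 : j < N := by omega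
    rw [hv]
    simp only [dif_pos hj, dif_pos hj1]
    rw [hw]
    simp only
    set a := ι ⟨j, hj1⟩ with ha
    set b' := ι ⟨j+1, hj⟩ with hb'
    have hab : a < b' := hιmono (by rw [Fin.mk_lt_mk]; omega)
    have hgap : rc P a + (b' - a - 1) ≤ rc P b' := by
      apply rc_gap P hP a b' hab
      intro x hx1 hx2
      by_contra hx0
      have hxk : x < k := lt_trans hx2 (hιlt _)
      obtain ⟨t, ht⟩ := hιsurj x ((hTmem x).2 ⟨hxk, hx0⟩)
      have h1 : (⟨j, hj1⟩ : Fin N) < t := by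
        apply hιmono.lt_iff_lt.1
        rw [ht]; exact hx1
      have h2 : t < (⟨j+1, hj⟩ : Fin N) := by
        apply hιmono.lt_iff_lt.1
        rw [ht]; exact hx2
      rw [Fin.lt_def] at h1 h2
      simp only at h1 h2
      omega
    push_cast
    omega
  have hkey := parity_count b hb01 N v hvmono
  -- v 0 ≥ 0
  have hv0 : 0 ≤ v 0 := by
    rw [hv]
    simp only [dif_pos (by omega : 0 < N)]
    rw [hw]
    simp only
    have hpre : (ι ⟨0, by omega⟩ : ℕ) ≤ rc P (ι ⟨0, by omega⟩) := by
      apply rc_pre P hP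
      intro x hx
      by_contra hx0
      have hxk : x < k := lt_trans hx (hιlt _)
      obtain ⟨t, ht⟩ := hιsurj x ((hTmem x).2 ⟨hxk, hx0⟩)
      have h0t : (⟨0, by omega⟩ : Fin N) ≤ t := by
        rw [Fin.le_def]
        exact Nat.zero_le _
      have := le_trans (hιmono.monotone h0t) (le_of_eq ht)
      omega
    push_cast
    omega
  -- v (N-1) bound
  have hvlast : v (N - 1) ≤ 2*(N:ℤ) - 1 + (d:ℤ) - (k:ℤ) := by
    have hlt : N - 1 < N := by omega
    rw [hv]
    simp only [dif_pos hlt]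
    rw [hw]
    simp only
    set a := ι ⟨N-1, hlt⟩ with ha
    have hpost : rc P a + (k - 1 - a) ≤ Multiset.card P.roots := by
      apply rc_post P hP a k (hιlt _)
      intro x hx1 hx2
      by_contra hx0
      obtain ⟨t, ht⟩ := hιsurj x ((hTmem x).2 ⟨hx2, hx0⟩)
      have hle : t ≤ (⟨N-1, hlt⟩ : Fin N) := by
        rw [Fin.le_def]
        simp only
        omega
      have := le_trans (le_of_eq ht.symm) (hιmono.monotone hle)
      omega
    have hak : a < k := hιlt _
    push_cast
    omega
  -- conclude: n ≤ count over range N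
  have hcount : (n:ℤ) ≤ (((Finset.range N).filter fun j => v j % 2 = b).card : ℤ) := by omega
  -- transfer to the goal count via injection
  have hinj : ((Finset.range N).filter fun j => v j % 2 = b).card
      ≤ ((Finset.range k).filter fun i : ℕ => 0 < (-1:ℝ)^i * P.eval (i:ℝ)).card := by
    apply Finset.card_le_card_of_injOn (fun j => if h : j < N then (ι ⟨j, h⟩ : ℕ) else 0)
    · intro j hj
      rw [Finset.mem_coe, Finset.mem_filter, Finset.mem_range] at hj
      obtain ⟨hjN, hjb⟩ := hj
      rw [Finset.mem_coe, Finset.mem_filter, Finset.mem_range]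
      simp only [dif_pos hjN]
      refine ⟨hιlt _, ?_⟩
      rw [hbiff _ (hιne ⟨j, hjN⟩)]
      rw [hv] at hjb
      simp only [dif_pos hjN] at hjb
      rw [hw] at hjb
      simp only at hjb
      omega
    · intro j1 h1 j2 h2 he
      rw [Finset.mem_coe, Finset.mem_filter, Finset.mem_range] at h1 h2
      simp only [dif_pos h1.1, dif_pos h2.1] at he
      have h12 : (⟨j1, h1.1⟩ : Fin N) = ⟨j2, h2.1⟩ := hιmono.injective he
      exact congrArg Fin.val h12
  omega


private def galeVec (d m : ℕ) : EuclideanSpace ℝ (Fin (d+1)) :=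
  WithLp.toLp 2 fun j => (-1:ℝ)^m * (m:ℝ)^(j:ℕ)

private lemma galeVec_apply (d m : ℕ) (j : Fin (d+1)) :
    galeVec d m j = (-1:ℝ)^m * (m:ℝ)^(j:ℕ) := rfl

private lemma galeVec_ne (d m : ℕ) : galeVec d m ≠ 0 := by
  intro h
  have h0 := congrFun (congrArg WithLp.ofLp h) (0 : Fin (d+1))
  have : galeVec d m 0 = (-1:ℝ)^m := by
    rw [galeVec_apply]
    norm_num
  rw [this] at h0
  have : ((0 : EuclideanSpace ℝ (Fin (d+1))) : Fin (d+1) → ℝ) 0 = 0 := rfl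
  rw [this] at h0
  exact pow_ne_zero m (by norm_num : (-1:ℝ) ≠ 0) h0

private def xpoly (d : ℕ) (x : EuclideanSpace ℝ (Fin (d+1))) : Polynomial ℝ :=
  ∑ j : Fin (d+1), Polynomial.monomial (j:ℕ) (x j)

private lemma xpoly_coeff (d : ℕ) (x : EuclideanSpace ℝ (Fin (d+1))) (j0 : Fin (d+1)) :
    (xpoly d x).coeff (j0:ℕ) = x j0 := by
  rw [xpoly, Polynomial.finset_sum_coeff]
  rw [Finset.sum_eq_single j0]
  · simp [Polynomial.coeff_monomial]
  · intro j _ hne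
    rw [Polynomial.coeff_monomial, if_neg]
    exact fun hc => hne (Fin.val_injective hc)
  · intro h; exact absurd (Finset.mem_univ j0) h

private lemma xpoly_ne (d : ℕ) (x : EuclideanSpace ℝ (Fin (d+1))) (hx : x ≠ 0) :
    xpoly d x ≠ 0 := by
  intro h
  apply hx
  ext j
  have := xpoly_coeff d x j
  rw [h, Polynomial.coeff_zero] at this
  exact this.symm

private lemma xpoly_deg (d : ℕ) (x : EuclideanSpace ℝ (Fin (d+1))) :
    (xpoly d x).natDegree ≤ d := by
  apply Polynomial.natDegree_sum_le_of_forall_le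
  intro j _
  exact le_trans (Polynomial.natDegree_monomial_le _) (by omega)

private lemma xpoly_eval (d : ℕ) (x : EuclideanSpace ℝ (Fin (d+1))) (t : ℝ) :
    (xpoly d x).eval t = ∑ j : Fin (d+1), x j * t^(j:ℕ) := by
  rw [xpoly, Polynomial.eval_finset_sum]
  simp [Polynomial.eval_monomial]

private lemma galeVec_inner (d m : ℕ) (x : EuclideanSpace ℝ (Fin (d+1))) :
    ⟪x, galeVec d m⟫ = (-1:ℝ)^m * (xpoly d x).eval (m:ℝ) := by
  rw [PiLp.inner_apply, xpoly_eval, Finset.mul_sum]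
  apply Finset.sum_congr rfl
  intro j _
  rw [galeVec_apply]
  simp only [RCLike.inner_apply, conj_trivial]
  ring

/-- Gale's `n`-fold cover: there are points `p_1, …, p_{d+2n}` on `S^d` such that the
open hemispheres `H i = { x ∈ S^d : ⟪x, p i⟫ > 0 }` form an antipodal `n`-fold
cover of `S^d`. -/
theorem gale_cover (d n : ℕ) (hd : 1 ≤ d) (hn : 1 ≤ n) :
    ∃ p : Fin (d + 2 * n) → EuclideanSpace ℝ (Fin (d + 1)),
      (∀ i, p i ∈ sphereSet d) ∧
      (∀ x ∈ sphereSet d,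
        n ≤ covCount (fun i : Fin (d + 2 * n) => {y ∈ sphereSet d | 0 < ⟪y, p i⟫}) x) ∧
      IsAntipodalFamily (fun i : Fin (d + 2 * n) => {y ∈ sphereSet d | 0 < ⟪y, p i⟫}) := by
  classical
  have hk0 : 0 < d + 2 * n := by omega
  refine ⟨fun i => ‖galeVec d (i:ℕ)‖⁻¹ • galeVec d (i:ℕ), ?_, ?_, ?_⟩
  · intro i
    have h1 : ‖‖galeVec d (i:ℕ)‖⁻¹ • galeVec d (i:ℕ)‖ = 1 :=
      norm_smul_inv_norm (galeVec_ne d (i:ℕ))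
    rw [sphereSet, mem_sphere_zero_iff_norm]
    exact h1
  · intro x hx
    have hxn : ‖x‖ = 1 := by rwa [sphereSet, mem_sphere_zero_iff_norm] at hx
    have hx0 : x ≠ 0 := by
      intro h; rw [h, norm_zero] at hxn; norm_num at hxn
    have hinner : ∀ m : ℕ, ⟪x, ‖galeVec d m‖⁻¹ • galeVec d m⟫
        = ‖galeVec d m‖⁻¹ * ((-1:ℝ)^m * (xpoly d x).eval (m:ℝ)) := by
      intro m
      rw [real_inner_smul_right, galeVec_inner]
    have hpos : ∀ m : ℕ, (0 < ⟪x, ‖galeVec d m‖⁻¹ • galeVec d m⟫)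
        ↔ 0 < (-1:ℝ)^m * (xpoly d x).eval (m:ℝ) := by
      intro m
      rw [hinner m]
      have hv : 0 < ‖galeVec d m‖⁻¹ :=
        inv_pos.2 (norm_pos_iff.2 (galeVec_ne d m))
      constructor
      · intro h
        by_contra hc
        push_neg at hc
        nlinarith
      · intro h; exact mul_pos hv h
    have hcov : covCount (fun i : Fin (d + 2*n) =>
          {y ∈ sphereSet d | 0 < ⟪y, ‖galeVec d (i:ℕ)‖⁻¹ • galeVec d (i:ℕ)⟫}) x
        = (Finset.univ.filter fun i : Fin (d + 2*n) =>
            x ∈ {y ∈ sphereSet d | 0 < ⟪y, ‖galeVec d (i:ℕ)‖⁻¹ • galeVec d (i:ℕ)⟫}).card := by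
      rw [covCount, Nat.card_eq_fintype_card, Fintype.card_subtype]
    rw [hcov]
    have hcg := count_good d n (xpoly d x) (xpoly_ne d x hx0) (xpoly_deg d x) hn
    refine le_trans hcg (Finset.card_le_card_of_injOn
      (fun m => if h : m < d + 2*n then (⟨m, h⟩ : Fin (d + 2*n)) else ⟨0, hk0⟩) ?_ ?_)
    · intro m hm
      rw [Finset.mem_coe, Finset.mem_filter, Finset.mem_range] at hm
      obtain ⟨hm1, hm2⟩ := hm
      rw [Finset.mem_coe, Finset.mem_filter]
      refine ⟨Finset.mem_univ _, ?_⟩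
      simp only [dif_pos hm1]
      exact ⟨hx, (hpos m).2 hm2⟩
    · intro m1 h1 m2 h2 he
      rw [Finset.mem_coe, Finset.mem_filter, Finset.mem_range] at h1 h2
      simp only [dif_pos h1.1, dif_pos h2.1] at he
      exact congrArg Fin.val he
  · intro i y hy hy2
    have hyp : 0 < ⟪y, ‖galeVec d (i:ℕ)‖⁻¹ • galeVec d (i:ℕ)⟫ := hy.2
    have hyp2 : 0 < ⟪-y, ‖galeVec d (i:ℕ)‖⁻¹ • galeVec d (i:ℕ)⟫ := hy2.2
    rw [inner_neg_left] at hyp2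
    linarith
end
end
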